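/- arXiv:1405.6734 — 9 statements merged into one kernel-verified Lean document; each statement's English description precedes it below -/
import Mathlib

section
/- In the Verma module V(h,c) over the Virasoro algebra, a vector w₂ = e_1² v + a·e_2 v in the degree-2 subspace satisfies e_{-1} w₂ = 0 if and only if a = -(2/3)(2h+1) (assuming the coefficient of e_1² v is normalized to 1). -/
/-- In the Verma module `V(h,c)`, the degree-2 vector `w₂ = e₁² v + a • e₂ v` is
annihilated by `e₋₁` if and only if `a = -(2/3)(2h+1)`. (The vector `e 1 v` is nonzero
since the Verma module is free over `U(L₁)`.) -/
theorem level_two_e_neg_one_condition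
    (M : Type*) [AddCommGroup M] [Module ℂ M]
    (e : ℤ → M →ₗ[ℂ] M) (c h : ℂ) (v : M)
    (hrel : ∀ i j : ℤ, ∀ m : M,
      e i (e j m) - e j (e i m) =
        ((j : ℂ) - (i : ℂ)) • e (i + j) m +
          (if i + j = 0 then (((j : ℂ) ^ 3 - (j : ℂ)) / 12) * c else 0) • m)
    (hv0 : e 0 v = h • v)
    (hvneg : ∀ i : ℤ, i < 0 → e i v = 0)
    (h1 : e 1 v ≠ 0)
    (a : ℂ) :
    e (-1) (e 1 (e 1 v) + a • e 2 v) = 0 ↔ a = -(2/3) * (2*h + 1) := by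
  have hneg1 : e (-1) v = 0 := hvneg (-1) (by norm_num)
  have hA : e (-1) (e 1 v) = (2*h) • v := by
    have := hrel (-1) 1 v
    simp [hneg1, hv0, smul_smul] at this
    norm_num at this
    rw [this]
  have hC : e 0 (e 1 v) = (h+1) • e 1 v := by
    have := hrel 0 1 v
    simp [hv0, map_smul] at this
    rw [sub_eq_iff_eq_add] at this
    rw [this, add_smul, one_smul]; abel
  have hB : e (-1) (e 1 (e 1 v)) = (4*h+2) • e 1 v := by
    have := hrel (-1) 1 (e 1 v)
    simp [hA, hC, map_smul, smul_smul] at this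
    norm_num at this
    rw [sub_eq_iff_eq_add] at this
    rw [this]; module
  have hD : e (-1) (e 2 v) = (3:ℂ) • e 1 v := by
    have := hrel (-1) 2 v
    simp [hneg1] at this
    norm_num at this
    rw [this]
  rw [map_add, map_smul, hB, hD, smul_smul, ← add_smul, smul_eq_zero]
  simp only [h1, or_false]
  constructor
  · intro hEq; linear_combination hEq / 3
  · intro hEq; rw [hEq]; ring
end

section
/- In the Verma module V(h,c), the vector w₂ = e_1² v - (2/3)(2h+1) e_2 v satisfies e_{-2} w₂ = 0 if and only if 6h - (2/3)(2h+1)(4h + c/2) = 0. -/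
/-- In the Verma module `V(h,c)`, the vector `w₂ = e₁² v - (2/3)(2h+1) e₂ v` is
annihilated by `e₋₂` if and only if `6h - (2/3)(2h+1)(4h + c/2) = 0`. -/
theorem level_two_e_neg_two_condition
    (M : Type*) [AddCommGroup M] [Module ℂ M]
    (e : ℤ → M →ₗ[ℂ] M) (c h : ℂ) (v : M)
    (hrel : ∀ i j : ℤ, ∀ m : M,
      e i (e j m) - e j (e i m) =
        ((j : ℂ) - (i : ℂ)) • e (i + j) m +
          (if i + j = 0 then (((j : ℂ) ^ 3 - (j : ℂ)) / 12) * c else 0) • m)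
    (hv0 : e 0 v = h • v)
    (hvneg : ∀ i : ℤ, i < 0 → e i v = 0)
    (hv : v ≠ 0) :
    e (-2) (e 1 (e 1 v) - ((2/3) * (2*h + 1)) • e 2 v) = 0 ↔
      6*h - (2/3) * (2*h + 1) * (4*h + c/2) = 0 := by
  have hm1 : e (-1) v = 0 := hvneg (-1) (by norm_num)
  have hm2 : e (-2) v = 0 := hvneg (-2) (by norm_num)
  have h1 : e (-1) (e 1 v) = (2*h) • v := by
    have := hrel (-1) 1 v
    simp [hm1, hv0, smul_smul] at this
    rw [this]; module
  have h2 : e (-2) (e 1 v) = 0 := by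
    have := hrel (-2) 1 v
    simp [hm1, hm2] at this
    linear_combination (norm := module) this
  have h3 : e (-2) (e 1 (e 1 v)) = (6*h) • v := by
    have := hrel (-2) 1 (e 1 v)
    simp [h1, h2, smul_smul] at this
    rw [this]; module
  have h4 : e (-2) (e 2 v) = (4*h + c/2) • v := by
    have := hrel (-2) 2 v
    simp [hm2, hv0, smul_smul] at this
    rw [this]; module
  rw [map_sub, map_smul, h3, h4, smul_smul, ← sub_smul, smul_eq_zero]
  constructor
  · rintro (hc | hc)
    · linear_combination hc
    · exact absurd hc hv
  · intro hc
    left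
    linear_combination hc
end

section
/- For every nonzero t ∈ ℂ, the vector w₂ = e_1² v + t e_2 v is a singular vector (e_{-1} w₂ = e_{-2} w₂ = 0) in the Verma module V(h(t), c(t)) with c(t) = 13 + 6t + 6t^{-1} and h(t) = -(3/4)t - 1/2. -/
/-- For every nonzero `t ∈ ℂ`, the vector `w₂ = e₁² v + t e₂ v` is a singular vector in the
Verma module `V(h(t), c(t))` with `c(t) = 13 + 6t + 6t⁻¹` and `h(t) = -(3/4)t - 1/2`. -/
theorem level_two_singular_vector
    (t : ℂ) (ht : t ≠ 0)
    (M : Type*) [AddCommGroup M] [Module ℂ M]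
    (e : ℤ → M →ₗ[ℂ] M) (v : M)
    (hrel : ∀ i j : ℤ, ∀ m : M,
      e i (e j m) - e j (e i m) =
        ((j : ℂ) - (i : ℂ)) • e (i + j) m +
          (if i + j = 0 then (((j : ℂ) ^ 3 - (j : ℂ)) / 12) * (13 + 6*t + 6*t⁻¹) else 0) • m)
    (hv0 : e 0 v = (-(3/4)*t - 1/2) • v)
    (hvneg : ∀ i : ℤ, i < 0 → e i v = 0) :
    e (-1) (e 1 (e 1 v) + t • e 2 v) = 0 ∧ e (-2) (e 1 (e 1 v) + t • e 2 v) = 0 := by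
  have hm1 : e (-1) v = 0 := hvneg (-1) (by norm_num)
  have hm2 : e (-2) v = 0 := hvneg (-2) (by norm_num)
  set h : ℂ := -(3/4)*t - 1/2 with hh
  -- e(-1)(e1 v) = 2h • v
  have A1 : e (-1) (e 1 v) = (2*h) • v := by
    have H := hrel (-1) 1 v
    norm_num [hm1, hv0, smul_smul] at H
    exact H
  -- e0(e1 v) = (h+1) • e1 v
  have A0 : e 0 (e 1 v) = (h + 1) • e 1 v := by
    have H := hrel 0 1 v
    norm_num [hv0, map_smul] at H
    rw [sub_eq_iff_eq_add] at H
    rw [H]; module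
  -- e(-1)(e1(e1 v)) = (4h+2) • e1 v
  have A2 : e (-1) (e 1 (e 1 v)) = (4*h + 2) • e 1 v := by
    have H := hrel (-1) 1 (e 1 v)
    norm_num [A1, A0, map_smul] at H
    rw [sub_eq_iff_eq_add] at H
    rw [H]; module
  -- e(-1)(e2 v) = 3 • e1 v
  have A3 : e (-1) (e 2 v) = (3:ℂ) • e 1 v := by
    have H := hrel (-1) 2 v
    norm_num [hm1] at H
    rw [H]
  -- e(-2)(e1 v) = 0
  have B1 : e (-2) (e 1 v) = 0 := by
    have H := hrel (-2) 1 v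
    norm_num [hm1, hm2] at H
    rw [H]
  -- e(-2)(e1(e1 v)) = 6h • v
  have B2 : e (-2) (e 1 (e 1 v)) = (6*h) • v := by
    have H := hrel (-2) 1 (e 1 v)
    norm_num [B1, A1, map_smul] at H
    rw [H]; module
  -- e(-2)(e2 v) = (4h + c/2) • v
  have B3 : e (-2) (e 2 v) = (4*h + (13 + 6*t + 6*t⁻¹)/2) • v := by
    have H := hrel (-2) 2 v
    norm_num [hm2, hv0] at H
    rw [H]; module
  constructor
  · rw [map_add, map_smul, A2, A3, smul_smul]
    have : 4*h + 2 = -(3*t) := by rw [hh]; ring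
    rw [this]
    module
  · rw [map_add, map_smul, B2, B3, smul_smul]
    have hc : t * (4*h + (13 + 6*t + 6*t⁻¹)/2) = -(6*h) := by
      rw [hh]; field_simp; ring
    rw [hc]
    module
end

section
/- For p = 3, the Benoit–Saint-Aubin element S_{3,1}(t) = e_1³ + t(2 e_1 e_2 + 2 e_2 e_1) + 4t² e_3 applied to the highest weight vector v of the Verma module V(h_{3,1}(t), c(t)), where c(t) = 13 + 6t + 6t^{-1} and h_{3,1}(t) = -2t - 1, yields a singular vector: e_{-1} S_{3,1}(t) v = 0 and e_{-2} S_{3,1}(t) v = 0. -/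
/-- For `p = 3`, the Benoit–Saint-Aubin element
`S₃,₁(t) = e₁³ + t(2 e₁e₂ + 2 e₂e₁) + 4t² e₃` applied to the highest weight vector of the
Verma module `V(h₃,₁(t), c(t))`, with `c(t) = 13 + 6t + 6t⁻¹` and `h₃,₁(t) = -2t - 1`,
yields a singular vector. -/
theorem benoit_saint_aubin_S31_singular
    (t : ℂ) (ht : t ≠ 0)
    (M : Type*) [AddCommGroup M] [Module ℂ M]
    (e : ℤ → M →ₗ[ℂ] M) (v : M)
    (hrel : ∀ i j : ℤ, ∀ m : M,
      e i (e j m) - e j (e i m) =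
        ((j : ℂ) - (i : ℂ)) • e (i + j) m +
          (if i + j = 0 then (((j : ℂ) ^ 3 - (j : ℂ)) / 12) * (13 + 6*t + 6*t⁻¹) else 0) • m)
    (hv0 : e 0 v = (-2*t - 1) • v)
    (hvneg : ∀ i : ℤ, i < 0 → e i v = 0) :
    e (-1) (e 1 (e 1 (e 1 v)) + (2*t) • e 1 (e 2 v) + (2*t) • e 2 (e 1 v)
        + (4*t^2) • e 3 v) = 0 ∧
    e (-2) (e 1 (e 1 (e 1 v)) + (2*t) • e 1 (e 2 v) + (2*t) • e 2 (e 1 v)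
        + (4*t^2) • e 3 v) = 0 := by
  have key : ∀ i j : ℤ, ∀ m : M, e i (e j m) = e j (e i m) +
      (((j : ℂ) - (i : ℂ)) • e (i + j) m +
        (if i + j = 0 then (((j : ℂ) ^ 3 - (j : ℂ)) / 12) * (13 + 6*t + 6*t⁻¹) else 0) • m) := by
    intro i j m
    rw [← hrel i j m]; abel
  have hm1 : e (-1) v = 0 := hvneg (-1) (by norm_num)
  have hm2 : e (-2) v = 0 := hvneg (-2) (by norm_num)
  have s1 : e (-1) (e 1 v) = (2*(-2*t-1)) • v := by
    rw [key]; norm_num [hm1, hv0, smul_smul]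
  have s2 : e (-1) (e 2 v) = (3:ℂ) • e 1 v := by
    rw [key]; norm_num [hm1]
  have s3 : e (-1) (e 3 v) = (4:ℂ) • e 2 v := by
    rw [key]; norm_num [hm1]
  have s4 : e 0 (e 1 v) = (-2*t) • e 1 v := by
    rw [key]; norm_num [hv0, map_smul]
    module
  have s5 : e 0 (e 2 v) = (-2*t+1) • e 2 v := by
    rw [key]; norm_num [hv0, map_smul]
    module
  have s6 : e (-1) (e 1 (e 1 v)) = (4*(-2*t-1)+2) • e 1 v := by
    rw [key]; norm_num [s1, s4, map_smul]
    module
  have s7 : e 0 (e 1 (e 1 v)) = (-2*t+1) • e 1 (e 1 v) := by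
    rw [key]; norm_num [s4, map_smul]
    module
  have s8 : e (-1) (e 1 (e 1 (e 1 v))) = (6*(-2*t-1)+6) • e 1 (e 1 v) := by
    rw [key]; norm_num [s6, s7, map_smul]
    module
  have s9 : e (-1) (e 1 (e 2 v)) = (3:ℂ) • e 1 (e 1 v) + (2*(-2*t-1)+4) • e 2 v := by
    rw [key]; norm_num [s2, s5, map_smul]
    module
  have s10 : e (-1) (e 2 (e 1 v)) = (3:ℂ) • e 1 (e 1 v) + (2*(-2*t-1)) • e 2 v := by
    rw [key]; norm_num [s1, map_smul]
    module
  have s11 : e (-2) (e 1 v) = 0 := by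
    rw [key]; norm_num [hm1, hm2]
  have s12 : e (-2) (e 2 v) = (4*(-2*t-1) + (13+6*t+6*t⁻¹)/2) • v := by
    rw [key]; norm_num [hm2, hv0, smul_smul]
    module
  have s13 : e (-2) (e 3 v) = (5:ℂ) • e 1 v := by
    rw [key]; norm_num [hm2]
  have s14 : e (-2) (e 1 (e 1 v)) = (6*(-2*t-1)) • v := by
    rw [key]; norm_num [s1, s11, map_smul]
    module
  have s15 : e (-2) (e 1 (e 1 (e 1 v))) = (18*(-2*t-1)+6) • e 1 v := by
    rw [key]; norm_num [s6, s14, map_smul]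
    module
  have s16 : e (-2) (e 1 (e 2 v)) = (4*(-2*t-1) + (13+6*t+6*t⁻¹)/2 + 9) • e 1 v := by
    rw [key]; norm_num [s2, s12, map_smul]
    module
  have s17 : e (-2) (e 2 (e 1 v)) = (4*(-2*t) + (13+6*t+6*t⁻¹)/2) • e 1 v := by
    rw [key]; norm_num [s4, s11, map_smul]
    module
  constructor
  · rw [map_add, map_add, map_add, map_smul, map_smul, map_smul, s8, s9, s10, s3]
    match_scalars <;> ring
  · rw [map_add, map_add, map_add, map_smul, map_smul, map_smul, s15, s16, s17, s13]
    match_scalars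
    field_simp
    ring
end

section
/- Define v^{(0)} = v in the Verma module V(h,c) with c = 13 + 6t + 6t^{-1} and h = -((p-1+t)(t^{-1}(p+1)+3))/4, and recursively v^{(k)} = (2t Σ_{j=1}^{k} ((j-1)(2t-1) + 2k - 2p - 1) e_j v^{(k-j)}) / (k(2p-k)(k-p-t)) for 1 ≤ k ≤ 2p-1 (assuming t ∉ {p-1, p-2, ..., p-(2p-1)}, t ≠ 0). Then e_{-1} v^{(k)} = -(p + 2 - k + 3t) v^{(k-1)} for all k = 1, ..., 2p-1. -/
/-- With `v⁽⁰⁾ = v` and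
`v⁽ᵏ⁾ = (2t Σ_{j=1}^{k} ((j-1)(2t-1) + 2k - 2p - 1) e_j v⁽ᵏ⁻ʲ⁾) / (k(2p-k)(k-p-t))`
for `1 ≤ k ≤ 2p-1`, in the Verma module `V(h,c)` with `c = 13 + 6t + 6t⁻¹` and
`h = -((p-1+t)(t⁻¹(p+1)+3))/4`, one has `e₋₁ v⁽ᵏ⁾ = -(p+2-k+3t) v⁽ᵏ⁻¹⁾` for
`k = 1, …, 2p-1`. -/
theorem e_neg_one_on_vseq
    (p : ℕ) (hp : 0 < p) (t : ℂ) (ht : t ≠ 0)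
    (htg : ∀ r : ℕ, 1 ≤ r → r ≤ 2*p - 1 → t ≠ (p : ℂ) - (r : ℂ))
    (M : Type*) [AddCommGroup M] [Module ℂ M]
    (e : ℤ → M →ₗ[ℂ] M) (v : M)
    (hrel : ∀ i j : ℤ, ∀ m : M,
      e i (e j m) - e j (e i m) =
        ((j : ℂ) - (i : ℂ)) • e (i + j) m +
          (if i + j = 0 then (((j : ℂ) ^ 3 - (j : ℂ)) / 12) * (13 + 6*t + 6*t⁻¹) else 0) • m)
    (hv0 : e 0 v = (-(((p : ℂ) - 1 + t) * (t⁻¹ * ((p : ℂ) + 1) + 3)) / 4) • v)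
    (hvneg : ∀ i : ℤ, i < 0 → e i v = 0)
    (vseq : ℕ → M)
    (hseq0 : vseq 0 = v)
    (hrec : ∀ k : ℕ, 1 ≤ k → k ≤ 2*p - 1 →
      vseq k = (((k : ℂ) * (2*(p : ℂ) - (k : ℂ)) * ((k : ℂ) - (p : ℂ) - t))⁻¹ * (2*t)) •
        ∑ j ∈ Finset.Icc 1 k,
          (((j : ℂ) - 1) * (2*t - 1) + 2*(k : ℂ) - 2*(p : ℂ) - 1) • e (j : ℤ) (vseq (k - j))) :
    ∀ k : ℕ, 1 ≤ k → k ≤ 2*p - 1 →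
      e (-1) (vseq k) = (-((p : ℂ) + 2 - (k : ℂ) + 3*t)) • vseq (k - 1) := by
  have h2t : (2*t : ℂ) ≠ 0 := mul_ne_zero two_ne_zero ht
  -- commutator of e (-1) with e j, j ≥ 1
  have hcm : ∀ (j : ℕ), 1 ≤ j → ∀ w : M,
      e (-1) (e (j:ℤ) w) = e (j:ℤ) (e (-1) w) + ((j:ℂ) + 1) • e ((j:ℤ) - 1) w := by
    intro j hj w
    have H := hrel (-1) (j:ℤ) w
    rcases eq_or_ne j 1 with rfl | hj1
    · norm_num at H ⊢
      rw [sub_eq_iff_eq_add'] at H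
      exact H
    · rw [if_neg (by omega : (-1 + (j:ℤ)) ≠ 0), zero_smul, add_zero,
        sub_eq_iff_eq_add'] at H
      rw [show (-1 + (j:ℤ)) = (j:ℤ) - 1 by ring] at H
      push_cast at H ⊢
      rw [show ((j:ℂ) - (-1)) = (j:ℂ) + 1 by ring] at H
      exact H
  -- commutator of e 0 with e j, j ≥ 1
  have hc0 : ∀ (j : ℕ), 1 ≤ j → ∀ w : M,
      e 0 (e (j:ℤ) w) = e (j:ℤ) (e 0 w) + (j:ℂ) • e (j:ℤ) w := by
    intro j hj w
    have H := hrel 0 (j:ℤ) w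
    rw [if_neg (by omega : ((0:ℤ) + (j:ℤ)) ≠ 0), zero_smul, add_zero,
      sub_eq_iff_eq_add'] at H
    rw [show ((0:ℤ) + (j:ℤ)) = (j:ℤ) by ring] at H
    push_cast at H ⊢
    rw [show ((j:ℂ) - 0) = (j:ℂ) by ring] at H
    exact H
  -- e 0 eigenvalue lemma
  have he0 : ∀ k : ℕ, k ≤ 2*p - 1 →
      e 0 (vseq k) = ((-(((p : ℂ) - 1 + t) * (t⁻¹ * ((p : ℂ) + 1) + 3)) / 4) + (k:ℂ)) • vseq k := by
    intro k
    induction k using Nat.strong_induction_on with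
    | _ k IH =>
      intro hk2
      rcases Nat.eq_zero_or_pos k with rfl | hk1
      · simpa [hseq0] using hv0
      · have hco : ∀ j ∈ Finset.Icc 1 k,
            (((j:ℂ) - 1) * (2*t - 1) + 2*(k:ℂ) - 2*(p:ℂ) - 1) • e 0 (e (j:ℤ) (vseq (k - j)))
              = ((-(((p:ℂ) - 1 + t) * (t⁻¹ * ((p:ℂ) + 1) + 3)) / 4) + (k:ℂ)) •
                ((((j:ℂ) - 1) * (2*t - 1) + 2*(k:ℂ) - 2*(p:ℂ) - 1) • e (j:ℤ) (vseq (k - j))) := by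
          intro j hj
          simp only [Finset.mem_Icc] at hj
          rw [hc0 j hj.1, IH (k-j) (by omega) (by omega), map_smul]
          simp only [smul_add, smul_smul, ← add_smul]
          congr 1
          rw [Nat.cast_sub hj.2]
          ring
        rw [hrec k hk1 hk2]
        simp only [map_smul, map_sum]
        rw [Finset.sum_congr rfl hco, ← Finset.smul_sum, smul_comm]
  intro k
  induction k using Nat.strong_induction_on with
  | _ k IH =>
    intro hk1 hk2
    obtain ⟨m, rfl⟩ : ∃ m, k = m + 1 := ⟨k - 1, by omega⟩
    have hrk := hrec (m+1) hk1 hk2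
    rw [← Finset.Ico_add_one_right_eq_Icc, Finset.sum_Ico_eq_sum_range] at hrk
    simp only [Nat.add_sub_cancel] at hrk
    simp only [show ∀ i : ℕ, m + 1 - (1 + i) = m - i from fun i => by omega] at hrk
    -- nonvanishing of denominators
    have hC : ∀ r : ℕ, 1 ≤ r → r ≤ 2*p - 1 →
        ((r:ℂ) * (2*(p:ℂ) - (r:ℂ)) * ((r:ℂ) - (p:ℂ) - t)) ≠ 0 := by
      intro r h1 h2
      have e1 : (r:ℂ) ≠ 0 := Nat.cast_ne_zero.mpr (by omega)
      have e2 : 2*(p:ℂ) - (r:ℂ) ≠ 0 := by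
        have hne : ((2*p : ℕ):ℂ) ≠ ((r : ℕ):ℂ) := by
          rw [Ne, Nat.cast_inj]; omega
        intro h0
        apply hne
        push_cast
        linear_combination h0
      have e3 : (r:ℂ) - (p:ℂ) - t ≠ 0 := by
        intro h0
        apply htg (2*p - r) (by omega) (by omega)
        have hc : ((2*p - r:ℕ):ℂ) = 2*(p:ℂ) - (r:ℂ) := by
          rw [Nat.cast_sub (by omega : r ≤ 2*p)]; push_cast; ring
        rw [hc]
        linear_combination -h0
      exact mul_ne_zero (mul_ne_zero e1 e2) e3
    rw [hrk]
    simp only [map_smul, map_sum, Nat.add_sub_cancel]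
    have hstep1 : ∀ i ∈ Finset.range (m+1),
        ((((1+i:ℕ):ℂ) - 1) * (2*t - 1) + 2*((m+1:ℕ):ℂ) - 2*(p:ℂ) - 1) •
            e (-1) (e ((1+i:ℕ):ℤ) (vseq (m-i)))
          = ((((1+i:ℕ):ℂ) - 1) * (2*t - 1) + 2*((m+1:ℕ):ℂ) - 2*(p:ℂ) - 1) •
              e ((1+i:ℕ):ℤ) (e (-1) (vseq (m-i)))
            + (((((1+i:ℕ):ℂ) - 1) * (2*t - 1) + 2*((m+1:ℕ):ℂ) - 2*(p:ℂ) - 1) *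
                (((1+i:ℕ):ℂ) + 1)) • e (i:ℤ) (vseq (m-i)) := by
      intro i _
      rw [hcm (1+i) (by omega), show (((1+i:ℕ):ℤ)) - 1 = (i:ℤ) by push_cast; ring,
        smul_add, smul_smul]
    rw [Finset.sum_congr rfl hstep1, Finset.sum_add_distrib, Finset.sum_range_succ,
      Finset.sum_range_succ']
    simp only [Nat.sub_self, Nat.sub_zero, Nat.add_zero, Nat.cast_zero, hseq0,
      hvneg (-1) (by norm_num : (-1:ℤ) < 0), map_zero, smul_zero, add_zero]
    rw [he0 m (by omega), smul_smul]
    have hstep2 : ∀ i ∈ Finset.range m,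
        ((((1+i:ℕ):ℂ) - 1) * (2*t - 1) + 2*((m+1:ℕ):ℂ) - 2*(p:ℂ) - 1) •
            e ((1+i:ℕ):ℤ) (e (-1) (vseq (m-i)))
          = (((((1+i:ℕ):ℂ) - 1) * (2*t - 1) + 2*((m+1:ℕ):ℂ) - 2*(p:ℂ) - 1) *
              (-((p:ℂ) + 2 - ((m:ℂ) - (i:ℂ)) + 3*t))) • e ((1+i:ℕ):ℤ) (vseq (m-(1+i))) := by
      intro i hi
      simp only [Finset.mem_range] at hi
      rw [IH (m-i) (by omega) (by omega) (by omega), Nat.cast_sub (by omega : i ≤ m),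
        show m - i - 1 = m - (1+i) from by omega, map_smul, smul_smul]
    rw [Finset.sum_congr rfl hstep2, ← add_assoc]
    have hcomb : (∑ i ∈ Finset.range m,
          (((((1+i:ℕ):ℂ) - 1) * (2*t - 1) + 2*((m+1:ℕ):ℂ) - 2*(p:ℂ) - 1) *
            (-((p:ℂ) + 2 - ((m:ℂ) - (i:ℂ)) + 3*t))) • e ((1+i:ℕ):ℤ) (vseq (m-(1+i))))
        + ∑ i ∈ Finset.range m,
          (((((1+(i+1):ℕ):ℂ) - 1) * (2*t - 1) + 2*((m+1:ℕ):ℂ) - 2*(p:ℂ) - 1) *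
            (((1+(i+1):ℕ):ℂ) + 1)) • e ((i+1:ℕ):ℤ) (vseq (m-(i+1)))
        = (2 - (p:ℂ) + (m:ℂ) - 3*t) • ∑ i ∈ Finset.range m,
            ((((1+i:ℕ):ℂ) - 1) * (2*t - 1) + 2*(m:ℂ) - 2*(p:ℂ) - 1) •
              e ((1+i:ℕ):ℤ) (vseq (m-(1+i))) := by
      rw [Finset.smul_sum, ← Finset.sum_add_distrib]
      refine Finset.sum_congr rfl ?_
      intro i hi
      rw [show i+1 = 1+i from by omega, smul_smul, ← add_smul]
      congr 1
      push_cast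
      ring
    rw [hcomb]
    have hS : (2*t) • ∑ i ∈ Finset.range m,
          ((((1+i:ℕ):ℂ) - 1) * (2*t - 1) + 2*(m:ℂ) - 2*(p:ℂ) - 1) •
            e ((1+i:ℕ):ℤ) (vseq (m-(1+i)))
        = ((m:ℂ) * (2*(p:ℂ) - (m:ℂ)) * ((m:ℂ) - (p:ℂ) - t)) • vseq m := by
      rcases Nat.eq_zero_or_pos m with rfl | hm1
      · simp
      · have hrm := hrec m hm1 (by omega)
        rw [← Finset.Ico_add_one_right_eq_Icc, Finset.sum_Ico_eq_sum_range] at hrm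
        simp only [Nat.add_sub_cancel] at hrm
        rw [hrm, smul_smul]
        congr 1
        rw [← mul_assoc, mul_inv_cancel₀ (hC m hm1 (by omega)), one_mul]
    have h2 : (∑ i ∈ Finset.range m,
          ((((1+i:ℕ):ℂ) - 1) * (2*t - 1) + 2*(m:ℂ) - 2*(p:ℂ) - 1) •
            e ((1+i:ℕ):ℤ) (vseq (m-(1+i))))
        = ((2*t)⁻¹ * ((m:ℂ) * (2*(p:ℂ) - (m:ℂ)) * ((m:ℂ) - (p:ℂ) - t))) • vseq m := by
      calc (∑ i ∈ Finset.range m,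
          ((((1+i:ℕ):ℂ) - 1) * (2*t - 1) + 2*(m:ℂ) - 2*(p:ℂ) - 1) •
            e ((1+i:ℕ):ℤ) (vseq (m-(1+i))))
          = ((2*t)⁻¹ * (2*t)) • ∑ i ∈ Finset.range m,
              ((((1+i:ℕ):ℂ) - 1) * (2*t - 1) + 2*(m:ℂ) - 2*(p:ℂ) - 1) •
                e ((1+i:ℕ):ℤ) (vseq (m-(1+i))) := by
            rw [inv_mul_cancel₀ h2t, one_smul]
        _ = (2*t)⁻¹ • ((2*t) • ∑ i ∈ Finset.range m,
              ((((1+i:ℕ):ℂ) - 1) * (2*t - 1) + 2*(m:ℂ) - 2*(p:ℂ) - 1) •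
                e ((1+i:ℕ):ℤ) (vseq (m-(1+i)))) := by rw [smul_smul]
        _ = (2*t)⁻¹ • (((m:ℂ) * (2*(p:ℂ) - (m:ℂ)) * ((m:ℂ) - (p:ℂ) - t)) • vseq m) := by
              rw [hS]
        _ = ((2*t)⁻¹ * ((m:ℂ) * (2*(p:ℂ) - (m:ℂ)) * ((m:ℂ) - (p:ℂ) - t))) • vseq m := by
              rw [smul_smul]
    rw [h2]
    simp only [smul_smul]
    rw [← add_smul, smul_smul]
    congr 1
    have hCk := hC (m+1) hk1 hk2
    push_cast at hCk ⊢
    obtain ⟨⟨hCa, hCb⟩, hCc⟩ := mul_ne_zero_iff.mp hCk |>.imp_left mul_ne_zero_iff.mp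
    field_simp
    ring
end

section
/- With the vectors v^{(k)} defined recursively as v^{(0)} = v and v^{(k)} = (2t Σ_{j=1}^{k} ((j-1)(2t-1) + 2k - 2p - 1) e_j v^{(k-j)}) / (k(2p-k)(k-p-t)) in the Verma module V(h,c) with c = 13 + 6t + 6t^{-1} and h = -((p-1+t)(t^{-1}(p+1)+3))/4, one has e_{-2} v^{(1)} = 0 and e_{-2} v^{(k)} = -(p + 4 - k + 5t) v^{(k-2)} for k = 2, ..., 2p-1. -/
private def Cf (p : ℕ) (t : ℂ) (j m : ℕ) : ℂ :=
  ((j : ℂ) - 1) * (2*t - 1) + 2*(m : ℂ) - 2*(p : ℂ) - 1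

private def Df (p : ℕ) (t : ℂ) (m : ℕ) : ℂ :=
  (m : ℂ) * (2*(p : ℂ) - (m : ℂ)) * ((m : ℂ) - (p : ℂ) - t)

private lemma sum_Icc_one {M : Type*} [AddCommMonoid M] (f : ℕ → M) (n : ℕ) :
    ∑ j ∈ Finset.Icc 1 n, f j = ∑ i ∈ Finset.range n, f (1+i) := by
  rw [← Finset.Ico_add_one_right_eq_Icc, Finset.sum_Ico_eq_sum_range]
  rfl

set_option maxHeartbeats 3200000 in
/-- With `v⁽⁰⁾ = v` and
`v⁽ᵏ⁾ = (2t Σ_{j=1}^{k} ((j-1)(2t-1) + 2k - 2p - 1) e_j v⁽ᵏ⁻ʲ⁾) / (k(2p-k)(k-p-t))`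
for `1 ≤ k ≤ 2p-1`, in the Verma module `V(h,c)` with `c = 13 + 6t + 6t⁻¹` and
`h = -((p-1+t)(t⁻¹(p+1)+3))/4`, one has `e₋₂ v⁽¹⁾ = 0` and `e₋₂ v⁽ᵏ⁾ = -(p+4-k+5t) v⁽ᵏ⁻²⁾` for `k = 2, …, 2p-1`. -/
theorem e_neg_two_on_vseq
    (p : ℕ) (hp : 0 < p) (t : ℂ) (ht : t ≠ 0)
    (htg : ∀ r : ℕ, 1 ≤ r → r ≤ 2*p - 1 → t ≠ (p : ℂ) - (r : ℂ))
    (M : Type*) [AddCommGroup M] [Module ℂ M]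
    (e : ℤ → M →ₗ[ℂ] M) (v : M)
    (hrel : ∀ i j : ℤ, ∀ m : M,
      e i (e j m) - e j (e i m) =
        ((j : ℂ) - (i : ℂ)) • e (i + j) m +
          (if i + j = 0 then (((j : ℂ) ^ 3 - (j : ℂ)) / 12) * (13 + 6*t + 6*t⁻¹) else 0) • m)
    (hv0 : e 0 v = (-(((p : ℂ) - 1 + t) * (t⁻¹ * ((p : ℂ) + 1) + 3)) / 4) • v)
    (hvneg : ∀ i : ℤ, i < 0 → e i v = 0)
    (vseq : ℕ → M)
    (hseq0 : vseq 0 = v)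
    (hrec : ∀ k : ℕ, 1 ≤ k → k ≤ 2*p - 1 →
      vseq k = (((k : ℂ) * (2*(p : ℂ) - (k : ℂ)) * ((k : ℂ) - (p : ℂ) - t))⁻¹ * (2*t)) •
        ∑ j ∈ Finset.Icc 1 k,
          (((j : ℂ) - 1) * (2*t - 1) + 2*(k : ℂ) - 2*(p : ℂ) - 1) • e (j : ℤ) (vseq (k - j))) :
    e (-2) (vseq 1) = 0 ∧
    ∀ k : ℕ, 2 ≤ k → k ≤ 2*p - 1 →
      e (-2) (vseq k) = (-((p : ℂ) + 4 - (k : ℂ) + 5*t)) • vseq (k - 2) := by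
  -- nonzeroness of factors
  have hfac : ∀ k : ℕ, 1 ≤ k → k ≤ 2*p - 1 →
      ((k : ℂ) ≠ 0 ∧ 2*(p : ℂ) - (k : ℂ) ≠ 0 ∧ (k : ℂ) - (p : ℂ) - t ≠ 0) := by
    intro k h1 h2
    refine ⟨Nat.cast_ne_zero.2 (by omega), ?_, ?_⟩
    · have h : ((2*p : ℕ) : ℂ) ≠ ((k : ℕ) : ℂ) := by
        rw [Ne, Nat.cast_inj]; omega
      push_cast at h
      exact sub_ne_zero.2 h
    · intro h0
      refine htg (2*p - k) (by omega) (by omega) ?_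
      have hc : ((2*p - k : ℕ) : ℂ) = 2*(p : ℂ) - (k : ℂ) := by
        push_cast [Nat.cast_sub (by omega : k ≤ 2*p)]; ring
      rw [hc]
      linear_combination -h0
  have hDne : ∀ k : ℕ, 1 ≤ k → k ≤ 2*p - 1 → Df p t k ≠ 0 := by
    intro k h1 h2
    obtain ⟨c1, c2, c3⟩ := hfac k h1 h2
    exact mul_ne_zero (mul_ne_zero c1 c2) c3
  -- recursion in range form
  have hr : ∀ k : ℕ, 1 ≤ k → k ≤ 2*p - 1 →
      vseq k = ((Df p t k)⁻¹ * (2*t)) •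
        ∑ i ∈ Finset.range k, Cf p t (1+i) k • e ((1+i : ℕ) : ℤ) (vseq (k - (1+i))) := by
    intro k h1 h2
    have h := hrec k h1 h2
    rw [sum_Icc_one] at h
    simpa only [Cf, Df] using h
  -- extracted sum identity
  have hsum : ∀ m : ℕ, m ≤ 2*p - 1 →
      ∑ i ∈ Finset.range m, Cf p t (1+i) m • e ((1+i : ℕ) : ℤ) (vseq (m - (1+i))) =
        ((2*t)⁻¹ * Df p t m) • vseq m := by
    intro m hm
    rcases Nat.eq_zero_or_pos m with h0 | h1
    · subst h0; simp [Df]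
    · rw [hr m h1 hm, smul_smul]
      rw [show ((2*t)⁻¹ * Df p t m) * ((Df p t m)⁻¹ * (2*t)) = 1 by
        field_simp [hDne m h1 hm], one_smul]
  -- commutator specializations
  have comm0 : ∀ i : ℕ, ∀ m : M,
      e 0 (e ((1+i : ℕ) : ℤ) m) = e ((1+i : ℕ) : ℤ) (e 0 m) + ((1+i : ℕ) : ℂ) • e ((1+i : ℕ) : ℤ) m := by
    intro i m
    have h := hrel 0 ((1+i : ℕ) : ℤ) m
    rw [if_neg (by push_cast; omega), zero_add, zero_smul, add_zero] at h
    have h2 := sub_eq_iff_eq_add.mp h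
    rw [h2]
    rw [show ((((1+i : ℕ) : ℤ) : ℂ) - ((0 : ℤ) : ℂ)) = ((1+i : ℕ) : ℂ) by push_cast; ring]
    abel
  have comm1 : ∀ i : ℕ, ∀ m : M,
      e (-1) (e ((1+i : ℕ) : ℤ) m) = e ((1+i : ℕ) : ℤ) (e (-1) m) +
        (((1+i : ℕ) : ℂ) + 1) • e ((i : ℕ) : ℤ) m := by
    intro i m
    have h := hrel (-1) ((1+i : ℕ) : ℤ) m
    have hcen : (if (-1 : ℤ) + ((1+i : ℕ) : ℤ) = 0 then
        (((((1+i : ℕ) : ℤ) : ℂ)) ^ 3 - ((((1+i : ℕ) : ℤ) : ℂ))) / 12 * (13 + 6*t + 6*t⁻¹) else 0) = 0 := by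
      split
      · next hc =>
          have : i = 0 := by push_cast at hc; omega
          subst this; norm_num
      · rfl
    rw [hcen, zero_smul, add_zero] at h
    have h2 := sub_eq_iff_eq_add.mp h
    rw [h2]
    rw [show ((-1 : ℤ) + ((1+i : ℕ) : ℤ)) = ((i : ℕ) : ℤ) by push_cast; ring]
    rw [show ((((1+i : ℕ) : ℤ) : ℂ) - ((-1 : ℤ) : ℂ)) = ((1+i : ℕ) : ℂ) + 1 by push_cast; ring]
    abel
  have comm2 : ∀ i : ℕ, ∀ m : M,
      e (-2) (e ((1+i : ℕ) : ℤ) m) = e ((1+i : ℕ) : ℤ) (e (-2) m) +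
        (((1+i : ℕ) : ℂ) + 2) • e ((i : ℤ) - 1) m +
        (if i = 1 then (13 + 6*t + 6*t⁻¹)/2 else 0) • m := by
    intro i m
    have h := hrel (-2) ((1+i : ℕ) : ℤ) m
    have hcen : (if (-2 : ℤ) + ((1+i : ℕ) : ℤ) = 0 then
        (((((1+i : ℕ) : ℤ) : ℂ)) ^ 3 - ((((1+i : ℕ) : ℤ) : ℂ))) / 12 * (13 + 6*t + 6*t⁻¹) else 0)
        = (if i = 1 then (13 + 6*t + 6*t⁻¹)/2 else 0) := by
      rcases eq_or_ne i 1 with h1 | h1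
      · subst h1; norm_num; ring
      · rw [if_neg (by push_cast; omega), if_neg h1]
    rw [hcen] at h
    have h2 := sub_eq_iff_eq_add.mp h
    rw [h2]
    rw [show ((-2 : ℤ) + ((1+i : ℕ) : ℤ)) = ((i : ℤ) - 1) by push_cast; ring]
    rw [show ((((1+i : ℕ) : ℤ) : ℂ) - ((-2 : ℤ) : ℂ)) = ((1+i : ℕ) : ℂ) + 2 by push_cast; ring]
    abel
  -- the main simultaneous induction
  have key : ∀ k : ℕ, k ≤ 2*p - 1 →
      (e 0 (vseq k) = ((-(((p : ℂ) - 1 + t) * (t⁻¹ * ((p : ℂ) + 1) + 3)) / 4) + (k : ℂ)) • vseq k) ∧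
      (e (-1) (vseq k) = if 1 ≤ k then ((k : ℂ) - (p : ℂ) - 2 - 3*t) • vseq (k - 1) else 0) ∧
      (e (-2) (vseq k) = if 2 ≤ k then ((k : ℂ) - (p : ℂ) - 4 - 5*t) • vseq (k - 2) else 0) := by
    intro k
    induction k using Nat.strong_induction_on with
    | _ k IH =>
      intro hk
      rcases k with _ | n
      · refine ⟨?_, ?_, ?_⟩
        · rw [hseq0, hv0]; norm_num
        · rw [if_neg (by omega), hseq0, hvneg (-1) (by norm_num)]
        · rw [if_neg (by omega), hseq0, hvneg (-2) (by norm_num)]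
      · have hk2 : n + 1 ≤ 2*p - 1 := hk
        have hrk := hr (n+1) (by omega) hk2
        obtain ⟨c1, c2, c3⟩ := hfac (n+1) (by omega) hk2
        push_cast at c1 c2 c3
        -- E0
        have hE0 : e 0 (vseq (n+1)) =
            ((-(((p : ℂ) - 1 + t) * (t⁻¹ * ((p : ℂ) + 1) + 3)) / 4) + ((n+1 : ℕ) : ℂ)) • vseq (n+1) := by
          conv_lhs => rw [hrk]
          rw [map_smul, map_sum]
          have step : ∀ i ∈ Finset.range (n+1),
              e 0 (Cf p t (1+i) (n+1) • e ((1+i : ℕ) : ℤ) (vseq (n+1 - (1+i)))) =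
              ((-(((p : ℂ) - 1 + t) * (t⁻¹ * ((p : ℂ) + 1) + 3)) / 4) + ((n+1 : ℕ) : ℂ)) •
                (Cf p t (1+i) (n+1) • e ((1+i : ℕ) : ℤ) (vseq (n+1 - (1+i)))) := by
            intro i hi
            have hin : i < n + 1 := Finset.mem_range.mp hi
            rw [map_smul, comm0 i, show n + 1 - (1+i) = n - i from by omega]
            rw [(IH (n-i) (by omega) (by omega)).1, map_smul]
            match_scalars
            rw [Nat.cast_sub (show i ≤ n from by omega)]
            ring
          rw [Finset.sum_congr rfl step]
          rw [← Finset.smul_sum,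
            smul_comm ((Df p t (n+1))⁻¹ * (2*t))
              ((-(((p : ℂ) - 1 + t) * (t⁻¹ * ((p : ℂ) + 1) + 3)) / 4) + ((n+1 : ℕ) : ℂ)), ← hrk]
        -- E1
        have hE1 : e (-1) (vseq (n+1)) = (((n+1 : ℕ) : ℂ) - (p : ℂ) - 2 - 3*t) • vseq n := by
          conv_lhs => rw [hrk]
          rw [map_smul, map_sum]
          have step : ∀ i ∈ Finset.range (n+1),
              e (-1) (Cf p t (1+i) (n+1) • e ((1+i : ℕ) : ℤ) (vseq (n+1 - (1+i)))) =
              Cf p t (1+i) (n+1) • e ((1+i : ℕ) : ℤ) (e (-1) (vseq (n - i))) +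
                (Cf p t (1+i) (n+1) * (((1+i : ℕ) : ℂ) + 1)) • e ((i : ℕ) : ℤ) (vseq (n - i)) := by
            intro i hi
            rw [show n + 1 - (1+i) = n - i from by omega, map_smul, comm1 i, smul_add, smul_smul]
          rw [Finset.sum_congr rfl step, Finset.sum_add_distrib]
          have hSA : ∑ i ∈ Finset.range (n+1),
              Cf p t (1+i) (n+1) • e ((1+i : ℕ) : ℤ) (e (-1) (vseq (n - i))) =
              ∑ i ∈ Finset.range n,
                (Cf p t (1+i) (n+1) * (((n - i : ℕ) : ℂ) - (p:ℂ) - 2 - 3*t)) •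
                  e ((1+i : ℕ) : ℤ) (vseq (n - (1+i))) := by
            rw [Finset.sum_range_succ]
            have hlast : e (-1) (vseq (n - n)) = 0 := by
              rw [Nat.sub_self, hseq0, hvneg (-1) (by norm_num)]
            rw [hlast, map_zero, smul_zero, add_zero]
            refine Finset.sum_congr rfl fun i hi => ?_
            have hin : i < n := Finset.mem_range.mp hi
            have hIH := (IH (n-i) (by omega) (by omega)).2.1
            rw [if_pos (by omega)] at hIH
            rw [hIH, map_smul, smul_smul, show n - i - 1 = n - (1+i) from by omega]
          have hSB : ∑ i ∈ Finset.range (n+1),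
              (Cf p t (1+i) (n+1) * (((1+i : ℕ) : ℂ) + 1)) • e ((i : ℕ) : ℤ) (vseq (n - i)) =
              (∑ i ∈ Finset.range n,
                (Cf p t (1+(i+1)) (n+1) * (((1+(i+1) : ℕ) : ℂ) + 1)) •
                  e ((1+i : ℕ) : ℤ) (vseq (n - (1+i)))) +
              (Cf p t 1 (n+1) * 2 *
                ((-(((p : ℂ) - 1 + t) * (t⁻¹ * ((p : ℂ) + 1) + 3)) / 4) + (n : ℂ))) • vseq n := by
            rw [Finset.sum_range_succ']
            congr 1
            · refine Finset.sum_congr rfl fun i hi => ?_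
              rw [show ((i+1 : ℕ) : ℤ) = ((1+i : ℕ) : ℤ) from by push_cast; ring,
                show n - (i+1) = n - (1+i) from by omega]
            · simp only [Nat.cast_zero, Nat.sub_zero, Nat.add_zero]
              rw [(IH n (by omega) (by omega)).1, smul_smul]
              congr 1
              push_cast
              ring
          rw [hSA, hSB, ← add_assoc, ← Finset.sum_add_distrib]
          have hcomb : ∀ i ∈ Finset.range n,
              (Cf p t (1+i) (n+1) * (((n - i : ℕ) : ℂ) - (p:ℂ) - 2 - 3*t)) •
                  e ((1+i : ℕ) : ℤ) (vseq (n - (1+i))) +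
                (Cf p t (1+(i+1)) (n+1) * (((1+(i+1) : ℕ) : ℂ) + 1)) •
                  e ((1+i : ℕ) : ℤ) (vseq (n - (1+i))) =
              (((n+1 : ℕ) : ℂ) - (p:ℂ) + 1 - 3*t) •
                (Cf p t (1+i) n • e ((1+i : ℕ) : ℤ) (vseq (n - (1+i)))) := by
            intro i hi
            have hin : i < n := Finset.mem_range.mp hi
            rw [smul_smul, ← add_smul]
            congr 1
            rw [Nat.cast_sub (show i ≤ n from by omega)]
            simp only [Cf]
            push_cast
            ring
          rw [Finset.sum_congr rfl hcomb]
          rw [← Finset.smul_sum, hsum n (by omega)]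
          match_scalars
          simp only [Cf, Df]
          push_cast
          field_simp
          ring
        -- E2
        have hE2 : e (-2) (vseq (n+1)) =
            if 2 ≤ n+1 then (((n+1 : ℕ) : ℂ) - (p : ℂ) - 4 - 5*t) • vseq (n+1-2) else 0 := by
          rcases n with _ | m
          · -- k = 1
            rw [if_neg (by omega)]
            rw [hrk, map_smul, Finset.sum_range_one, map_smul, comm2 0]
            rw [show (0+1 : ℕ) - (1+0) = 0 from rfl, hseq0]
            rw [hvneg (-2) (by norm_num), map_zero]
            rw [show ((0:ℕ):ℤ) - 1 = (-1:ℤ) from by norm_num]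
            rw [hvneg (-1) (by norm_num)]
            simp
          · -- k = m+2
            rw [if_pos (by omega)]
            push_cast at c1 c2 c3
            show e (-2) (vseq (m+2)) = (((m+2 : ℕ) : ℂ) - (p : ℂ) - 4 - 5*t) • vseq m
            have hrk2 : vseq (m+2) = ((Df p t (m+2))⁻¹ * (2*t)) •
                ∑ i ∈ Finset.range (m+2),
                  Cf p t (1+i) (m+2) • e ((1+i : ℕ) : ℤ) (vseq (m+2 - (1+i))) := hrk
            conv_lhs => rw [hrk2]
            rw [map_smul, map_sum]
            have step : ∀ i ∈ Finset.range (m+2),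
                e (-2) (Cf p t (1+i) (m+2) • e ((1+i : ℕ) : ℤ) (vseq (m+2 - (1+i)))) =
                Cf p t (1+i) (m+2) • e ((1+i : ℕ) : ℤ) (e (-2) (vseq (m+1 - i))) +
                  (Cf p t (1+i) (m+2) * (((1+i : ℕ) : ℂ) + 2)) • e ((i : ℤ) - 1) (vseq (m+1 - i)) +
                  Cf p t (1+i) (m+2) •
                    ((if i = 1 then (13 + 6*t + 6*t⁻¹)/2 else 0) • vseq (m+1 - i)) := by
              intro i hi
              rw [show m + 2 - (1+i) = m + 1 - i from by omega, map_smul, comm2 i, smul_add,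
                smul_add, smul_smul]
            rw [Finset.sum_congr rfl step, Finset.sum_add_distrib, Finset.sum_add_distrib]
            have hT1 : ∑ i ∈ Finset.range (m+2),
                Cf p t (1+i) (m+2) • e ((1+i:ℕ):ℤ) (e (-2) (vseq (m+1-i))) =
                ∑ i ∈ Finset.range m,
                  (Cf p t (1+i) (m+2) * (((m+1-i : ℕ):ℂ) - (p:ℂ) - 4 - 5*t)) •
                    e ((1+i:ℕ):ℤ) (vseq (m - (1+i))) := by
              rw [Finset.sum_range_succ, Finset.sum_range_succ]
              have hz1 : e (-2) (vseq (m+1 - (m+1))) = 0 := by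
                rw [Nat.sub_self, hseq0, hvneg (-2) (by norm_num)]
              have hz2 : e (-2) (vseq (m+1 - m)) = 0 := by
                have hIH := (IH 1 (by omega) (by omega)).2.2
                rw [if_neg (by omega)] at hIH
                rw [show m+1-m = 1 from by omega, hIH]
              rw [hz1, hz2, map_zero, map_zero, smul_zero, smul_zero, add_zero, add_zero]
              refine Finset.sum_congr rfl fun i hi => ?_
              have hin : i < m := Finset.mem_range.mp hi
              have hIH := (IH (m+1-i) (by omega) (by omega)).2.2
              rw [if_pos (by omega)] at hIH
              rw [hIH, map_smul, smul_smul, show m+1-i-2 = m - (1+i) from by omega]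
            have hT2 : ∑ i ∈ Finset.range (m+2),
                (Cf p t (1+i) (m+2) * (((1+i:ℕ):ℂ) + 2)) • e ((i:ℤ)-1) (vseq (m+1-i)) =
                ((∑ i ∈ Finset.range m,
                  (Cf p t (1+(i+2)) (m+2) * (((1+(i+2):ℕ):ℂ) + 2)) •
                    e ((1+i:ℕ):ℤ) (vseq (m - (1+i)))) +
                 (Cf p t (1+(0+1)) (m+2) * ((((1+(0+1):ℕ):ℂ) + 2) *
                   ((-(((p : ℂ) - 1 + t) * (t⁻¹ * ((p : ℂ) + 1) + 3)) / 4) + (m : ℂ)))) • vseq m) +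
                (Cf p t (1+0) (m+2) * ((((1+0:ℕ):ℂ) + 2) *
                  (((m+1 : ℕ) : ℂ) - (p:ℂ) - 2 - 3*t))) • vseq m := by
              rw [Finset.sum_range_succ', Finset.sum_range_succ']
              congr 1
              · congr 1
                · refine Finset.sum_congr rfl fun i hi => ?_
                  rw [show (((i+1+1:ℕ)):ℤ) - 1 = ((1+i : ℕ) : ℤ) from by push_cast; ring,
                    show m+1-(i+1+1) = m - (1+i) from by omega,
                    show (1+(i+1+1) : ℕ) = 1+(i+2) from rfl]
                · rw [show (((0+1:ℕ)):ℤ) - 1 = (0:ℤ) from by norm_num,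
                    show m+1-(0+1) = m from by omega]
                  rw [(IH m (by omega) (by omega)).1, smul_smul, mul_assoc]
              · rw [show (((0:ℕ)):ℤ) - 1 = (-1:ℤ) from by norm_num,
                  show m+1-0 = m+1 from rfl]
                have hIH := (IH (m+1) (by omega) (by omega)).2.1
                rw [if_pos (by omega)] at hIH
                rw [hIH, show m+1-1 = m from rfl, smul_smul, mul_assoc]
            have hT3 : ∑ i ∈ Finset.range (m+2),
                Cf p t (1+i) (m+2) •
                  ((if i = 1 then (13 + 6*t + 6*t⁻¹)/2 else 0) • vseq (m+1-i)) =
                Cf p t (1+1) (m+2) • (((13 + 6*t + 6*t⁻¹)/2) • vseq m) := by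
              rw [Finset.sum_eq_single 1]
              · rw [if_pos rfl, show m+1-1 = m from rfl]
              · intro b hb hb1
                rw [if_neg hb1, zero_smul, smul_zero]
              · intro h
                exact absurd (Finset.mem_range.mpr (by omega)) h
            rw [hT1, hT2, hT3]
            have hab : (∑ i ∈ Finset.range m,
                  (Cf p t (1+i) (m+2) * (((m+1-i : ℕ):ℂ) - (p:ℂ) - 4 - 5*t)) •
                    e ((1+i:ℕ):ℤ) (vseq (m - (1+i)))) +
                (∑ i ∈ Finset.range m,
                  (Cf p t (1+(i+2)) (m+2) * (((1+(i+2):ℕ):ℂ) + 2)) •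
                    e ((1+i:ℕ):ℤ) (vseq (m - (1+i)))) =
                (((m+2 : ℕ) : ℂ) - (p:ℂ) + 2 - 5*t) • (((2*t)⁻¹ * Df p t m) • vseq m) := by
              rw [← Finset.sum_add_distrib]
              have hcomb : ∀ i ∈ Finset.range m,
                  (Cf p t (1+i) (m+2) * (((m+1-i : ℕ):ℂ) - (p:ℂ) - 4 - 5*t)) •
                      e ((1+i:ℕ):ℤ) (vseq (m - (1+i))) +
                    (Cf p t (1+(i+2)) (m+2) * (((1+(i+2):ℕ):ℂ) + 2)) •
                      e ((1+i:ℕ):ℤ) (vseq (m - (1+i))) =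
                  (((m+2 : ℕ) : ℂ) - (p:ℂ) + 2 - 5*t) •
                    (Cf p t (1+i) m • e ((1+i:ℕ):ℤ) (vseq (m - (1+i)))) := by
                intro i hi
                have hin : i < m := Finset.mem_range.mp hi
                rw [smul_smul, ← add_smul]
                congr 1
                rw [Nat.cast_sub (show i ≤ m+1 from by omega)]
                simp only [Cf]
                push_cast
                ring
              rw [Finset.sum_congr rfl hcomb, ← Finset.smul_sum, hsum m (by omega)]
            rw [eq_sub_of_add_eq hab]
            have hD2 : Df p t (m+2) ≠ 0 := hDne (m+2) (by omega) (by omega)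
            rw [show (((m+2:ℕ):ℂ) - (p:ℂ) - 4 - 5*t) =
                (Df p t (m+2))⁻¹ * (2*t) *
                  ((2*t)⁻¹ * Df p t (m+2) * (((m+2:ℕ):ℂ) - (p:ℂ) - 4 - 5*t)) from by
                field_simp [hD2, ht]]
            conv_rhs => rw [mul_smul]
            congr 1
            match_scalars
            · simp only [Cf, Df]
              push_cast
              field_simp [ht]
              ring
            · ring
        refine ⟨hE0, ?_, hE2⟩
        rw [if_pos (by omega)]
        exact hE1
  -- assemble
  have h2p1 : 1 ≤ 2*p - 1 := by omega
  constructor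
  · have h := (key 1 h2p1).2.2
    rwa [if_neg (by omega)] at h
  · intro k hk2 hkle
    have h := (key k hkle).2.2
    rw [if_pos hk2] at h
    rw [h]
    congr 1
    ring
end

section
/- Let p be a positive integer and t a generic complex parameter, and define v^{(k)} as in the recursion v^{(0)} = v, v^{(k)} = (2t Σ_{j=1}^{k} ((j-1)(2t-1) + 2k - 2p - 1) e_j v^{(k-j)}) / (k(2p-k)(k-p-t)). Then the vector w = 2t Σ_{j=1}^{2p} ((j-1)(2t-1) + 2p - 1) e_j v^{(2p-j)} in V(h,c), with c = 13 + 6t + 6t^{-1} and h = -((p-1+t)(t^{-1}(p+1)+3))/4, satisfies e_{-1} w = 0 and e_{-2} w = 0, hence is a singular vector of degree 2p. -/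
namespace VirSingAux

variable {M : Type*} [AddCommGroup M] [Module ℂ M]

/-- coefficient in the recursion -/
noncomputable def cfd (p : ℕ) (t : ℂ) (j k : ℕ) : ℂ := ((j:ℂ) - 1) * (2*t - 1) + 2*(k:ℂ) - 2*(p:ℂ) - 1

/-- denominator -/
noncomputable def Dd (p : ℕ) (t : ℂ) (k : ℕ) : ℂ := (k:ℂ) * (2*(p:ℂ) - (k:ℂ)) * ((k:ℂ) - (p:ℂ) - t)

/-- highest weight -/
noncomputable def hhd (p : ℕ) (t : ℂ) : ℂ := -(((p:ℂ) - 1 + t) * (t⁻¹ * ((p:ℂ) + 1) + 3)) / 4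

/-- eigenvalue of e₋₁ -/
noncomputable def afd (p : ℕ) (t : ℂ) (k : ℕ) : ℂ := if k = 0 then 0 else (k:ℂ) - (p:ℂ) - 2 - 3*t

/-- eigenvalue of e₋₂ -/
noncomputable def bfd (p : ℕ) (t : ℂ) (k : ℕ) : ℂ := if k ≤ 1 then 0 else (k:ℂ) - (p:ℂ) - 4 - 5*t

lemma icc_insert_top (k : ℕ) (hk : 1 ≤ k) :
    Finset.Icc 1 k = insert k (Finset.Icc 1 (k-1)) := by
  ext j; simp only [Finset.mem_Icc, Finset.mem_insert]; omega

lemma icc_insert_bot (k : ℕ) (hk : 1 ≤ k) :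
    Finset.Icc 1 k = insert 1 (Finset.Icc 2 k) := by
  ext j; simp only [Finset.mem_Icc, Finset.mem_insert]; omega

lemma icc_shift1 (k : ℕ) (hk : 1 ≤ k) :
    Finset.Icc 2 k = (Finset.Icc 1 (k-1)).map (addRightEmbedding 1) := by
  rw [Finset.map_add_right_Icc]
  congr 1
  omega

lemma icc_insert_top2 (k : ℕ) (hk : 2 ≤ k) :
    Finset.Icc 1 k = insert k (insert (k-1) (Finset.Icc 1 (k-2))) := by
  ext j; simp only [Finset.mem_Icc, Finset.mem_insert]; omega

lemma icc_insert_bot2 (k : ℕ) (hk : 2 ≤ k) :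
    Finset.Icc 1 k = insert 1 (insert 2 (Finset.Icc 3 k)) := by
  ext j; simp only [Finset.mem_Icc, Finset.mem_insert]; omega

lemma icc_shift2 (k : ℕ) (hk : 2 ≤ k) :
    Finset.Icc 3 k = (Finset.Icc 1 (k-2)).map (addRightEmbedding 2) := by
  rw [Finset.map_add_right_Icc]
  congr 1
  omega

lemma sumE1 (e : ℤ → M →ₗ[ℂ] M) (vseq : ℕ → M) (cf : ℕ → ℕ → ℂ) (k : ℕ) (hk : 1 ≤ k)
    (comm1 : ∀ (j : ℤ) (m : M), e (-1) (e j m) = e j (e (-1) m) + ((j:ℂ)+1) • e (-1 + j) m)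
    (hv1 : e (-1) (vseq 0) = 0)
    (aa : ℕ → ℂ) (h1 : ∀ m, 1 ≤ m → m < k → e (-1) (vseq m) = aa m • vseq (m-1))
    (E : ℂ) (h0 : e 0 (vseq (k-1)) = E • vseq (k-1))
    (μ : ℂ)
    (hco : ∀ j : ℕ, 1 ≤ j → j < k →
      cf j k * aa (k-j) + (((j:ℂ))+2) * cf (j+1) k = μ * cf j (k-1)) :
    e (-1) (∑ j ∈ Finset.Icc 1 k, cf j k • e (j:ℤ) (vseq (k-j)))
      = μ • (∑ j ∈ Finset.Icc 1 (k-1), cf j (k-1) • e (j:ℤ) (vseq (k-1-j)))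
        + (2 * cf 1 k * E) • vseq (k-1) := by
  rw [map_sum]
  have step : ∀ j ∈ Finset.Icc 1 k,
      e (-1) (cf j k • e (j:ℤ) (vseq (k-j)))
        = cf j k • e (j:ℤ) (e (-1) (vseq (k-j)))
          + (cf j k * ((j:ℂ)+1)) • e (-1 + (j:ℤ)) (vseq (k-j)) := by
    intro j _
    rw [map_smul, comm1, smul_add, smul_smul]
    norm_cast
  rw [Finset.sum_congr rfl step, Finset.sum_add_distrib]
  have T1 : (∑ j ∈ Finset.Icc 1 k, cf j k • e (j:ℤ) (e (-1) (vseq (k-j))))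
      = ∑ j ∈ Finset.Icc 1 (k-1), (cf j k * aa (k-j)) • e (j:ℤ) (vseq (k-1-j)) := by
    rw [icc_insert_top k hk, Finset.sum_insert (by simp only [Finset.mem_Icc]; omega)]
    have hkk : (k : ℕ) - k = 0 := by omega
    rw [hkk, hv1, map_zero, smul_zero, zero_add]
    refine Finset.sum_congr rfl ?_
    intro j hj
    rw [Finset.mem_Icc] at hj
    rw [h1 (k-j) (by omega) (by omega), show k - j - 1 = k - 1 - j from by omega,
      map_smul, smul_smul]
  have T2 : (∑ j ∈ Finset.Icc 1 k, (cf j k * ((j:ℂ)+1)) • e (-1 + (j:ℤ)) (vseq (k-j)))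
      = (2 * cf 1 k * E) • vseq (k-1)
        + ∑ j ∈ Finset.Icc 1 (k-1), (cf (j+1) k * ((j:ℂ)+2)) • e (j:ℤ) (vseq (k-1-j)) := by
    rw [icc_insert_bot k hk, Finset.sum_insert (by simp only [Finset.mem_Icc]; omega)]
    congr 1
    · norm_num
      rw [h0, smul_smul]
      ring_nf
    · rw [icc_shift1 k hk, Finset.sum_map]
      refine Finset.sum_congr rfl ?_
      intro j hj
      rw [Finset.mem_Icc] at hj
      have h1' : (addRightEmbedding 1) j = j + 1 := rfl
      rw [h1']
      have h2' : (-1 + ((j+1 : ℕ) : ℤ)) = (j : ℤ) := by push_cast; ring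
      have h3' : k - (j+1) = k - 1 - j := by omega
      have h4' : (((j+1:ℕ)):ℂ) + 1 = (j:ℂ) + 2 := by push_cast; ring
      rw [h2', h3', h4']
  rw [T1, T2, ← add_assoc, add_right_comm, add_comm _ ((2 * cf 1 k * E) • vseq (k-1)),
    add_comm (μ • _) _]
  congr 1
  rw [← Finset.sum_add_distrib, Finset.smul_sum]
  refine Finset.sum_congr rfl ?_
  intro j hj
  rw [Finset.mem_Icc] at hj
  rw [← add_smul, smul_smul]
  congr 1
  have := hco j (by omega) (by omega)
  linear_combination this

lemma sumE2 (e : ℤ → M →ₗ[ℂ] M) (vseq : ℕ → M) (cf : ℕ → ℕ → ℂ) (κ : ℂ)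
    (k : ℕ) (hk : 2 ≤ k)
    (comm2 : ∀ (j : ℤ) (m : M), e (-2) (e j m)
      = e j (e (-2) m) + ((j:ℂ)+2) • e (-2 + j) m + (if j = 2 then κ else 0) • m)
    (hv2a : e (-2) (vseq 0) = 0) (hv2b : e (-2) (vseq 1) = 0)
    (bb : ℕ → ℂ) (h2 : ∀ m, 2 ≤ m → m < k → e (-2) (vseq m) = bb m • vseq (m-2))
    (A1 : ℂ) (h1 : e (-1) (vseq (k-1)) = A1 • vseq (k-2))
    (E : ℂ) (h0 : e 0 (vseq (k-2)) = E • vseq (k-2))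
    (ν : ℂ)
    (hco : ∀ j : ℕ, 1 ≤ j → j ≤ k-2 →
      cf j k * bb (k-j) + (((j:ℂ))+4) * cf (j+2) k = ν * cf j (k-2)) :
    e (-2) (∑ j ∈ Finset.Icc 1 k, cf j k • e (j:ℤ) (vseq (k-j)))
      = ν • (∑ j ∈ Finset.Icc 1 (k-2), cf j (k-2) • e (j:ℤ) (vseq (k-2-j)))
        + (3 * cf 1 k * A1 + 4 * cf 2 k * E + cf 2 k * κ) • vseq (k-2) := by
  rw [map_sum]
  have step : ∀ j ∈ Finset.Icc 1 k,
      e (-2) (cf j k • e (j:ℤ) (vseq (k-j)))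
        = cf j k • e (j:ℤ) (e (-2) (vseq (k-j)))
          + (cf j k * ((j:ℂ)+2)) • e (-2 + (j:ℤ)) (vseq (k-j))
          + (if j = 2 then (cf 2 k * κ) • vseq (k-2) else 0) := by
    intro j _
    have hz : cf j k • (if ((j:ℤ)) = 2 then κ else 0) • vseq (k - j)
        = (if j = 2 then (cf 2 k * κ) • vseq (k-2) else 0) := by
      by_cases hj : j = 2
      · subst hj
        simp [smul_smul]
      · have hj' : ((j:ℤ)) ≠ 2 := by omega
        simp [hj, hj']
    rw [map_smul, comm2, smul_add, smul_add, smul_smul, hz]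
    norm_cast
  rw [Finset.sum_congr rfl step, Finset.sum_add_distrib, Finset.sum_add_distrib]
  have T3 : (∑ j ∈ Finset.Icc 1 k, if j = 2 then (cf 2 k * κ) • vseq (k-2) else 0)
      = (cf 2 k * κ) • vseq (k-2) := by
    rw [Finset.sum_ite_eq' (Finset.Icc 1 k) 2 (fun _ => (cf 2 k * κ) • vseq (k-2))]
    simp only [Finset.mem_Icc]
    rw [if_pos (by omega)]
  have T1 : (∑ j ∈ Finset.Icc 1 k, cf j k • e (j:ℤ) (e (-2) (vseq (k-j))))
      = ∑ j ∈ Finset.Icc 1 (k-2), (cf j k * bb (k-j)) • e (j:ℤ) (vseq (k-2-j)) := by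
    rw [icc_insert_top2 k hk,
      Finset.sum_insert (by simp only [Finset.mem_insert, Finset.mem_Icc]; omega),
      Finset.sum_insert (by simp only [Finset.mem_Icc]; omega)]
    rw [show k - k = 0 from by omega, show k - (k-1) = 1 from by omega, hv2a, hv2b,
      map_zero, map_zero, smul_zero, smul_zero, zero_add, zero_add]
    refine Finset.sum_congr rfl ?_
    intro j hj
    rw [Finset.mem_Icc] at hj
    rw [h2 (k-j) (by omega) (by omega), show k - j - 2 = k - 2 - j from by omega,
      map_smul, smul_smul]
  have T2 : (∑ j ∈ Finset.Icc 1 k, (cf j k * ((j:ℂ)+2)) • e (-2 + (j:ℤ)) (vseq (k-j)))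
      = (3 * cf 1 k * A1 + 4 * cf 2 k * E) • vseq (k-2)
        + ∑ j ∈ Finset.Icc 1 (k-2), (cf (j+2) k * ((j:ℂ)+4)) • e (j:ℤ) (vseq (k-2-j)) := by
    rw [icc_insert_bot2 k hk,
      Finset.sum_insert (by simp only [Finset.mem_insert, Finset.mem_Icc]; omega),
      Finset.sum_insert (by simp only [Finset.mem_Icc]; omega)]
    have j1 : (cf 1 k * (((1:ℕ):ℂ)+2)) • e (-2 + ((1:ℕ):ℤ)) (vseq (k-1))
        = (3 * cf 1 k * A1) • vseq (k-2) := by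
      norm_num
      rw [h1, smul_smul]
      ring_nf
    have j2 : (cf 2 k * (((2:ℕ):ℂ)+2)) • e (-2 + ((2:ℕ):ℤ)) (vseq (k-2))
        = (4 * cf 2 k * E) • vseq (k-2) := by
      norm_num
      rw [h0, smul_smul]
      ring_nf
    rw [j1, j2, ← add_assoc, ← add_smul]
    congr 1
    rw [icc_shift2 k hk, Finset.sum_map]
    refine Finset.sum_congr rfl ?_
    intro j hj
    rw [Finset.mem_Icc] at hj
    have h1' : (addRightEmbedding 2) j = j + 2 := rfl
    rw [h1']
    have h2' : (-2 + ((j+2 : ℕ) : ℤ)) = (j : ℤ) := by push_cast; ring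
    have h3' : k - (j+2) = k - 2 - j := by omega
    have h4' : (((j+2:ℕ)):ℂ) + 2 = (j:ℂ) + 4 := by push_cast; ring
    rw [h2', h3', h4']
  rw [T1, T2, T3]
  have comb : (∑ j ∈ Finset.Icc 1 (k-2), (cf j k * bb (k-j)) • e (j:ℤ) (vseq (k-2-j)))
      + (∑ j ∈ Finset.Icc 1 (k-2), (cf (j+2) k * ((j:ℂ)+4)) • e (j:ℤ) (vseq (k-2-j)))
      = ν • (∑ j ∈ Finset.Icc 1 (k-2), cf j (k-2) • e (j:ℤ) (vseq (k-2-j))) := by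
    rw [← Finset.sum_add_distrib, Finset.smul_sum]
    refine Finset.sum_congr rfl ?_
    intro j hj
    rw [Finset.mem_Icc] at hj
    rw [← add_smul, smul_smul]
    congr 1
    have := hco j (by omega) (by omega)
    linear_combination this
  rw [← comb]
  module

lemma sumE0 (e : ℤ → M →ₗ[ℂ] M) (vseq : ℕ → M) (cf : ℕ → ℕ → ℂ) (k : ℕ) (hh : ℂ)
    (comm0 : ∀ (j : ℤ) (m : M), e 0 (e j m) = e j (e 0 m) + (j:ℂ) • e j m)
    (h0all : ∀ m, m < k → e 0 (vseq m) = (hh + (m:ℂ)) • vseq m) :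
    e 0 (∑ j ∈ Finset.Icc 1 k, cf j k • e (j:ℤ) (vseq (k-j)))
      = (hh + (k:ℂ)) • ∑ j ∈ Finset.Icc 1 k, cf j k • e (j:ℤ) (vseq (k-j)) := by
  rw [map_sum, Finset.smul_sum]
  refine Finset.sum_congr rfl ?_
  intro j hj
  rw [Finset.mem_Icc] at hj
  rw [map_smul, comm0, h0all (k-j) (by omega), map_smul]
  have hc : ((k-j:ℕ):ℂ) = (k:ℂ) - (j:ℂ) := by rw [Nat.cast_sub hj.2]
  rw [hc]
  have : (((j:ℤ)):ℂ) = (j:ℂ) := by push_cast; ring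
  rw [this]
  match_scalars
  ring

lemma mk_comm1 (t : ℂ) (e : ℤ → M →ₗ[ℂ] M)
    (hrel : ∀ i j : ℤ, ∀ m : M,
      e i (e j m) - e j (e i m) =
        ((j : ℂ) - (i : ℂ)) • e (i + j) m +
          (if i + j = 0 then (((j : ℂ) ^ 3 - (j : ℂ)) / 12) * (13 + 6*t + 6*t⁻¹) else 0) • m) :
    ∀ (j : ℤ) (m : M), e (-1) (e j m) = e j (e (-1) m) + ((j:ℂ)+1) • e (-1 + j) m := by
  intro j m
  have h := hrel (-1) j m
  have hz : (if (-1:ℤ) + j = 0 then (((j:ℂ)^3-(j:ℂ))/12)*(13+6*t+6*t⁻¹) else 0) = (0:ℂ) := by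
    split_ifs with hc
    · have hj : j = 1 := by omega
      subst hj; norm_num
    · rfl
  rw [hz, zero_smul, add_zero] at h
  have hcoef : ((j:ℂ) - ((-1:ℤ):ℂ)) = (j:ℂ) + 1 := by push_cast; ring
  rw [hcoef, sub_eq_iff_eq_add] at h
  rw [h]; abel

lemma mk_comm2 (t : ℂ) (e : ℤ → M →ₗ[ℂ] M)
    (hrel : ∀ i j : ℤ, ∀ m : M,
      e i (e j m) - e j (e i m) =
        ((j : ℂ) - (i : ℂ)) • e (i + j) m +
          (if i + j = 0 then (((j : ℂ) ^ 3 - (j : ℂ)) / 12) * (13 + 6*t + 6*t⁻¹) else 0) • m) :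
    ∀ (j : ℤ) (m : M), e (-2) (e j m) = e j (e (-2) m) + ((j:ℂ)+2) • e (-2 + j) m
      + (if j = 2 then (13+6*t+6*t⁻¹)/2 else 0) • m := by
  intro j m
  have h := hrel (-2) j m
  have hz : (if (-2:ℤ) + j = 0 then (((j:ℂ)^3-(j:ℂ))/12)*(13+6*t+6*t⁻¹) else 0)
      = (if j = 2 then (13+6*t+6*t⁻¹)/2 else 0) := by
    by_cases hc : j = 2
    · subst hc
      rw [if_pos (by norm_num), if_pos rfl]
      norm_num
      ring
    · rw [if_neg (by omega), if_neg hc]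
  rw [hz] at h
  have hcoef : ((j:ℂ) - ((-2:ℤ):ℂ)) = (j:ℂ) + 2 := by push_cast; ring
  rw [hcoef, sub_eq_iff_eq_add] at h
  rw [h]; abel

lemma mk_comm0 (t : ℂ) (e : ℤ → M →ₗ[ℂ] M)
    (hrel : ∀ i j : ℤ, ∀ m : M,
      e i (e j m) - e j (e i m) =
        ((j : ℂ) - (i : ℂ)) • e (i + j) m +
          (if i + j = 0 then (((j : ℂ) ^ 3 - (j : ℂ)) / 12) * (13 + 6*t + 6*t⁻¹) else 0) • m) :
    ∀ (j : ℤ) (m : M), e 0 (e j m) = e j (e 0 m) + (j:ℂ) • e j m := by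
  intro j m
  have h := hrel 0 j m
  have hz : (if (0:ℤ) + j = 0 then (((j:ℂ)^3-(j:ℂ))/12)*(13+6*t+6*t⁻¹) else 0) = (0:ℂ) := by
    split_ifs with hc
    · have hj : j = 0 := by omega
      subst hj; norm_num
    · rfl
  rw [hz, zero_smul, add_zero] at h
  have hcoef : ((j:ℂ) - ((0:ℤ):ℂ)) = (j:ℂ) := by push_cast; ring
  have hidx : (0:ℤ) + j = j := by ring
  rw [hcoef, hidx, sub_eq_iff_eq_add] at h
  rw [h]; abel

end VirSingAux

set_option maxHeartbeats 1000000 in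
open VirSingAux in
/-- With `v⁽⁰⁾ = v` and
`v⁽ᵏ⁾ = (2t Σ_{j=1}^{k} ((j-1)(2t-1) + 2k - 2p - 1) e_j v⁽ᵏ⁻ʲ⁾) / (k(2p-k)(k-p-t))`
for `1 ≤ k ≤ 2p-1`, in the Verma module `V(h,c)` with `c = 13 + 6t + 6t⁻¹` and
`h = -((p-1+t)(t⁻¹(p+1)+3))/4`, the vector `w = 2t Σ_{j=1}^{2p} ((j-1)(2t-1) + 2p - 1) e_j v⁽²ᵖ⁻ʲ⁾` satisfies
`e₋₁ w = 0` and `e₋₂ w = 0`, hence is a singular vector of degree `2p`. -/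
theorem w_is_singular_degree_2p
    (p : ℕ) (hp : 0 < p) (t : ℂ) (ht : t ≠ 0)
    (htg : ∀ r : ℕ, 1 ≤ r → r ≤ 2*p - 1 → t ≠ (p : ℂ) - (r : ℂ))
    (M : Type*) [AddCommGroup M] [Module ℂ M]
    (e : ℤ → M →ₗ[ℂ] M) (v : M)
    (hrel : ∀ i j : ℤ, ∀ m : M,
      e i (e j m) - e j (e i m) =
        ((j : ℂ) - (i : ℂ)) • e (i + j) m +
          (if i + j = 0 then (((j : ℂ) ^ 3 - (j : ℂ)) / 12) * (13 + 6*t + 6*t⁻¹) else 0) • m)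
    (hv0 : e 0 v = (-(((p : ℂ) - 1 + t) * (t⁻¹ * ((p : ℂ) + 1) + 3)) / 4) • v)
    (hvneg : ∀ i : ℤ, i < 0 → e i v = 0)
    (vseq : ℕ → M)
    (hseq0 : vseq 0 = v)
    (hrec : ∀ k : ℕ, 1 ≤ k → k ≤ 2*p - 1 →
      vseq k = (((k : ℂ) * (2*(p : ℂ) - (k : ℂ)) * ((k : ℂ) - (p : ℂ) - t))⁻¹ * (2*t)) •
        ∑ j ∈ Finset.Icc 1 k,
          (((j : ℂ) - 1) * (2*t - 1) + 2*(k : ℂ) - 2*(p : ℂ) - 1) • e (j : ℤ) (vseq (k - j))) :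
    ∀ w : M,
      w = (2*t) • ∑ j ∈ Finset.Icc 1 (2*p),
        (((j : ℂ) - 1) * (2*t - 1) + 2*(p : ℂ) - 1) • e (j : ℤ) (vseq (2*p - j)) →
      e (-1) w = 0 ∧ e (-2) w = 0 := by
  intro w hw
  have comm1 := mk_comm1 t e hrel
  have comm2 := mk_comm2 t e hrel
  have comm0 := mk_comm0 t e hrel
  have hv1 : e (-1) (vseq 0) = 0 := by rw [hseq0]; exact hvneg (-1) (by norm_num)
  have hv2 : e (-2) (vseq 0) = 0 := by rw [hseq0]; exact hvneg (-2) (by norm_num)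
  have h2t : (2:ℂ)*t ≠ 0 := mul_ne_zero two_ne_zero ht
  have hfac : ∀ k : ℕ, 1 ≤ k → k ≤ 2*p-1 →
      ((k:ℂ) ≠ 0 ∧ 2*(p:ℂ) - (k:ℂ) ≠ 0 ∧ (k:ℂ) - (p:ℂ) - t ≠ 0) := by
    intro k hk1 hk2
    refine ⟨Nat.cast_ne_zero.mpr (by omega), ?_, ?_⟩
    · intro hcon
      have hne : (((2*p - k:ℕ)):ℂ) ≠ 0 := Nat.cast_ne_zero.mpr (by omega)
      apply hne
      rw [Nat.cast_sub (by omega : k ≤ 2*p)]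
      push_cast
      linear_combination hcon
    · intro hcon
      apply htg (2*p-k) (by omega) (by omega)
      rw [Nat.cast_sub (by omega : k ≤ 2*p)]
      push_cast
      linear_combination -hcon
  have hDnz : ∀ k : ℕ, 1 ≤ k → k ≤ 2*p-1 → Dd p t k ≠ 0 := by
    intro k hk1 hk2
    obtain ⟨a, b, c⟩ := hfac k hk1 hk2
    exact mul_ne_zero (mul_ne_zero a b) c
  have hrecd : ∀ k : ℕ, 1 ≤ k → k ≤ 2*p-1 →
      vseq k = ((Dd p t k)⁻¹ * (2*t)) •
        (∑ j ∈ Finset.Icc 1 k, cfd p t j k • e (j:ℤ) (vseq (k-j))) := by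
    intro k h1 h2
    exact hrec k h1 h2
  have hSval : ∀ m : ℕ, m ≤ 2*p-1 →
      (∑ j ∈ Finset.Icc 1 m, cfd p t j m • e (j:ℤ) (vseq (m-j)))
        = ((2*t)⁻¹ * Dd p t m) • vseq m := by
    intro m hm
    rcases Nat.eq_zero_or_pos m with h0 | h1
    · subst h0
      simp [Dd]
    · have h := hrecd m h1 hm
      rw [h, smul_smul]
      rw [show (2*t)⁻¹ * Dd p t m * ((Dd p t m)⁻¹ * (2*t)) = 1 from by
        have hD := hDnz m h1 hm
        field_simp]
      rw [one_smul]
  -- main induction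
  have hfacts : ∀ k : ℕ, k ≤ 2*p - 1 →
      (e 0 (vseq k) = (hhd p t + (k:ℂ)) • vseq k) ∧
      (e (-1) (vseq k) = afd p t k • vseq (k-1)) ∧
      (e (-2) (vseq k) = bfd p t k • vseq (k-2)) := by
    intro k
    induction k using Nat.strong_induction_on with
    | _ k IH =>
      intro hk2p
      rcases Nat.eq_zero_or_pos k with hk0 | hk1
      · subst hk0
        refine ⟨?_, ?_, ?_⟩
        · rw [hseq0, hv0]
          norm_num [hhd]
        · rw [hv1, show afd p t 0 = 0 from by simp [afd], zero_smul]
        · rw [hv2, show bfd p t 0 = 0 from by simp [bfd], zero_smul]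
      · have hD := hDnz k hk1 hk2p
        obtain ⟨hf1, hf2, hf3⟩ := hfac k hk1 hk2p
        have hck : ((k-1:ℕ):ℂ) = (k:ℂ) - 1 := by
          rw [Nat.cast_sub hk1]; norm_num
        have F0 : e 0 (vseq k) = (hhd p t + (k:ℂ)) • vseq k := by
          rw [hrecd k hk1 hk2p, map_smul,
            sumE0 e vseq (cfd p t) k (hhd p t) comm0 (fun m hm => (IH m hm (by omega)).1),
            smul_comm, ← hrecd k hk1 hk2p]
        have F1 : e (-1) (vseq k) = afd p t k • vseq (k-1) := by
          have h0prev : e 0 (vseq (k-1)) = (hhd p t + ((k-1:ℕ):ℂ)) • vseq (k-1) :=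
            (IH (k-1) (by omega) (by omega)).1
          have h1prev : ∀ m, 1 ≤ m → m < k → e (-1) (vseq m) = afd p t m • vseq (m-1) :=
            fun m _ h2m => (IH m h2m (by omega)).2.1
          have hco : ∀ j : ℕ, 1 ≤ j → j < k →
              cfd p t j k * afd p t (k-j) + ((j:ℂ)+2) * cfd p t (j+1) k
                = ((k:ℂ)-(p:ℂ)+1-3*t) * cfd p t j (k-1) := by
            intro j hj1 hj2
            simp only [cfd, afd, if_neg (show ¬ (k-j = 0) from by omega)]
            rw [Nat.cast_sub (by omega : j ≤ k), hck]
            push_cast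
            ring
          rw [hrecd k hk1 hk2p, map_smul,
            sumE1 e vseq (cfd p t) k hk1 comm1 hv1 (afd p t) h1prev _ h0prev _ hco,
            hSval (k-1) (by omega)]
          rw [show afd p t k = (k:ℂ)-(p:ℂ)-2-3*t from by rw [afd, if_neg (by omega)]]
          have hsc : ((Dd p t k)⁻¹ * (2*t)) *
              ( ((k:ℂ)-(p:ℂ)+1-3*t) * ((2*t)⁻¹ * Dd p t (k-1))
                + 2 * cfd p t 1 k * (hhd p t + ((k-1:ℕ):ℂ)) )
              = (k:ℂ)-(p:ℂ)-2-3*t := by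
            have key : (2*t) * ( ((k:ℂ)-(p:ℂ)+1-3*t) * ((2*t)⁻¹ * Dd p t (k-1))
                + 2 * cfd p t 1 k * (hhd p t + ((k-1:ℕ):ℂ)) )
                = ((k:ℂ)-(p:ℂ)-2-3*t) * Dd p t k := by
              simp only [Dd, cfd, hhd]
              rw [hck]
              push_cast
              field_simp
              ring
            rw [mul_assoc, key, mul_comm ((k:ℂ)-(p:ℂ)-2-3*t) (Dd p t k),
              inv_mul_cancel_left₀ hD]
          rw [← hsc]
          module
        have F2 : e (-2) (vseq k) = bfd p t k • vseq (k-2) := by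
          rcases eq_or_lt_of_le (by omega : 1 ≤ k) with hk1' | hk2
          · -- k = 1
            have hk1'' : k = 1 := hk1'.symm
            subst hk1''
            have hz : e (-2) (e ((1:ℕ):ℤ) (vseq (1-1))) = 0 := by
              rw [comm2]
              rw [show (1:ℕ)-1 = 0 from rfl, hv2, map_zero]
              simp [hv1]
            rw [hrecd 1 (by norm_num) (by omega), map_smul, Finset.Icc_self,
              Finset.sum_singleton, map_smul, hz, smul_zero, smul_zero,
              show bfd p t 1 = 0 from by simp [bfd], zero_smul]
          · -- k ≥ 2
            have hk2' : 2 ≤ k := hk2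
            have hck2 : ((k-2:ℕ):ℂ) = (k:ℂ) - 2 := by
              rw [Nat.cast_sub hk2']; norm_num
            have hv2b : e (-2) (vseq 1) = 0 := by
              have h := (IH 1 (by omega) (by omega)).2.2
              rw [show bfd p t 1 = 0 from by simp [bfd], zero_smul] at h
              exact h
            have h2prev : ∀ m, 2 ≤ m → m < k → e (-2) (vseq m) = bfd p t m • vseq (m-2) :=
              fun m _ hmk => (IH m hmk (by omega)).2.2
            have h1prev : e (-1) (vseq (k-1)) = afd p t (k-1) • vseq (k-2) := by
              have h := (IH (k-1) (by omega) (by omega)).2.1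
              rw [show k-1-1 = k-2 from by omega] at h
              exact h
            have h0prev : e 0 (vseq (k-2)) = (hhd p t + ((k-2:ℕ):ℂ)) • vseq (k-2) :=
              (IH (k-2) (by omega) (by omega)).1
            have hco : ∀ j : ℕ, 1 ≤ j → j ≤ k-2 →
                cfd p t j k * bfd p t (k-j) + ((j:ℂ)+4) * cfd p t (j+2) k
                  = ((k:ℂ)-(p:ℂ)+2-5*t) * cfd p t j (k-2) := by
              intro j hj1 hj2
              simp only [cfd, bfd, if_neg (show ¬ (k-j ≤ 1) from by omega)]
              rw [Nat.cast_sub (by omega : j ≤ k), hck2]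
              push_cast
              ring
            rw [hrecd k hk1 hk2p, map_smul,
              sumE2 e vseq (cfd p t) ((13+6*t+6*t⁻¹)/2) k hk2' comm2 hv2 hv2b
                (bfd p t) h2prev _ h1prev _ h0prev _ hco,
              hSval (k-2) (by omega)]
            rw [show bfd p t k = (k:ℂ)-(p:ℂ)-4-5*t from by rw [bfd, if_neg (by omega)]]
            have hsc : ((Dd p t k)⁻¹ * (2*t)) *
                ( ((k:ℂ)-(p:ℂ)+2-5*t) * ((2*t)⁻¹ * Dd p t (k-2))
                  + (3 * cfd p t 1 k * afd p t (k-1)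
                    + 4 * cfd p t 2 k * (hhd p t + ((k-2:ℕ):ℂ))
                    + cfd p t 2 k * ((13+6*t+6*t⁻¹)/2)) )
                = (k:ℂ)-(p:ℂ)-4-5*t := by
              have key : (2*t) * ( ((k:ℂ)-(p:ℂ)+2-5*t) * ((2*t)⁻¹ * Dd p t (k-2))
                  + (3 * cfd p t 1 k * afd p t (k-1)
                    + 4 * cfd p t 2 k * (hhd p t + ((k-2:ℕ):ℂ))
                    + cfd p t 2 k * ((13+6*t+6*t⁻¹)/2)) )
                  = ((k:ℂ)-(p:ℂ)-4-5*t) * Dd p t k := by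
                simp only [Dd, cfd, hhd, afd, if_neg (show ¬ (k-1 = 0) from by omega)]
                rw [hck, hck2]
                push_cast
                field_simp
                ring
              rw [mul_assoc, key, mul_comm ((k:ℂ)-(p:ℂ)-4-5*t) (Dd p t k),
                inv_mul_cancel_left₀ hD]
            rw [← hsc]
            module
        exact ⟨F0, F1, F2⟩
  -- final assembly
  have hw' : w = (2*t) • ∑ j ∈ Finset.Icc 1 (2*p),
      cfd p t j (2*p) • e (j:ℤ) (vseq (2*p-j)) := by
    rw [hw]
    congr 1
    refine Finset.sum_congr rfl ?_
    intro j _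
    congr 1
    simp only [cfd]
    push_cast
    ring
  have hc2p1 : ((2*p-1:ℕ):ℂ) = 2*(p:ℂ) - 1 := by
    rw [Nat.cast_sub (by omega : 1 ≤ 2*p)]; push_cast; ring
  have hc2p2 : ((2*p-2:ℕ):ℂ) = 2*(p:ℂ) - 2 := by
    rw [Nat.cast_sub (by omega : 2 ≤ 2*p)]; push_cast; ring
  have h0top : e 0 (vseq (2*p-1)) = (hhd p t + ((2*p-1:ℕ):ℂ)) • vseq (2*p-1) :=
    (hfacts (2*p-1) (le_refl _)).1
  have h1all : ∀ m, 1 ≤ m → m < 2*p → e (-1) (vseq m) = afd p t m • vseq (m-1) :=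
    fun m _ hm => (hfacts m (by omega)).2.1
  constructor
  · -- e (-1) w = 0
    have hcoW : ∀ j : ℕ, 1 ≤ j → j < 2*p →
        cfd p t j (2*p) * afd p t (2*p-j) + ((j:ℂ)+2) * cfd p t (j+1) (2*p)
          = (2*(p:ℂ)-(p:ℂ)+1-3*t) * cfd p t j (2*p-1) := by
      intro j h1 h2
      simp only [cfd, afd, if_neg (show ¬ (2*p - j = 0) from by omega)]
      rw [Nat.cast_sub (by omega : j ≤ 2*p), hc2p1]
      push_cast
      ring
    rw [hw', map_smul,
      sumE1 e vseq (cfd p t) (2*p) (by omega) comm1 hv1 (afd p t) h1all _ h0top _ hcoW,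
      hSval (2*p-1) (le_refl _)]
    have hsc : (2*t) * ( (2*(p:ℂ)-(p:ℂ)+1-3*t) * ((2*t)⁻¹ * Dd p t (2*p-1))
        + 2 * cfd p t 1 (2*p) * (hhd p t + ((2*p-1:ℕ):ℂ)) ) = 0 := by
      simp only [Dd, cfd, hhd]
      rw [hc2p1]
      push_cast
      field_simp
      ring
    rw [show (0:M) = ((2*t) * ( (2*(p:ℂ)-(p:ℂ)+1-3*t) * ((2*t)⁻¹ * Dd p t (2*p-1))
        + 2 * cfd p t 1 (2*p) * (hhd p t + ((2*p-1:ℕ):ℂ)) )) • vseq (2*p-1) from by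
      rw [hsc, zero_smul]]
    module
  · -- e (-2) w = 0
    have hv2b : e (-2) (vseq 1) = 0 := by
      have h := (hfacts 1 (by omega)).2.2
      rw [show bfd p t 1 = 0 from by simp [bfd], zero_smul] at h
      exact h
    have h2all : ∀ m, 2 ≤ m → m < 2*p → e (-2) (vseq m) = bfd p t m • vseq (m-2) :=
      fun m _ hm => (hfacts m (by omega)).2.2
    have h1top : e (-1) (vseq (2*p-1)) = afd p t (2*p-1) • vseq (2*p-2) := by
      have h := h1all (2*p-1) (by omega) (by omega)
      rw [show 2*p-1-1 = 2*p-2 from by omega] at h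
      exact h
    have h0top2 : e 0 (vseq (2*p-2)) = (hhd p t + ((2*p-2:ℕ):ℂ)) • vseq (2*p-2) :=
      (hfacts (2*p-2) (by omega)).1
    have hcoW2 : ∀ j : ℕ, 1 ≤ j → j ≤ 2*p-2 →
        cfd p t j (2*p) * bfd p t (2*p-j) + ((j:ℂ)+4) * cfd p t (j+2) (2*p)
          = (2*(p:ℂ)-(p:ℂ)+2-5*t) * cfd p t j (2*p-2) := by
      intro j h1 h2
      simp only [cfd, bfd, if_neg (show ¬ (2*p - j ≤ 1) from by omega)]
      rw [Nat.cast_sub (by omega : j ≤ 2*p), hc2p2]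
      push_cast
      ring
    rw [hw', map_smul,
      sumE2 e vseq (cfd p t) ((13+6*t+6*t⁻¹)/2) (2*p) (by omega) comm2 hv2 hv2b
        (bfd p t) h2all _ h1top _ h0top2 _ hcoW2,
      hSval (2*p-2) (by omega)]
    have hsc : (2*t) * ( (2*(p:ℂ)-(p:ℂ)+2-5*t) * ((2*t)⁻¹ * Dd p t (2*p-2))
        + (3 * cfd p t 1 (2*p) * afd p t (2*p-1)
          + 4 * cfd p t 2 (2*p) * (hhd p t + ((2*p-2:ℕ):ℂ))
          + cfd p t 2 (2*p) * ((13+6*t+6*t⁻¹)/2)) ) = 0 := by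
      rw [show afd p t (2*p-1) = ((2*p-1:ℕ):ℂ) - (p:ℂ) - 2 - 3*t from by
        rw [afd, if_neg (by omega)]]
      simp only [Dd, cfd, hhd]
      rw [hc2p1, hc2p2]
      push_cast
      field_simp
      ring
    rw [show (0:M) = ((2*t) * ( (2*(p:ℂ)-(p:ℂ)+2-5*t) * ((2*t)⁻¹ * Dd p t (2*p-2))
        + (3 * cfd p t 1 (2*p) * afd p t (2*p-1)
          + 4 * cfd p t 2 (2*p) * (hhd p t + ((2*p-2:ℕ):ℂ))
          + cfd p t 2 (2*p) * ((13+6*t+6*t⁻¹)/2)) )) • vseq (2*p-2) from by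
      rw [hsc, zero_smul]]
    module
end

section
/- For p = 2, the element S_{2,2}(t) = e_1⁴ + 4t e_1 e_2 e_1 + ((1-t²)/t)(e_1² e_2 + e_2 e_1²) + ((1-t²)²/t²) e_2² + ((1+t)(4t-1)/t) e_1 e_3 + ((1-t)(4t+1)/t) e_3 e_1 + (3(1-t²)/t) e_4, applied to the highest weight vector v of V(h,c) with c = 13 + 6t + 6t^{-1} and h = -((1+t)(3t^{-1}+3))/4 = -(3/4)(t + 2 + t^{-1}), yields a vector annihilated by e_{-1} and e_{-2}. -/
set_option maxHeartbeats 2000000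


/-- For `p = 2`, the element
`S₂,₂(t) = e₁⁴ + 4t e₁e₂e₁ + ((1-t²)/t)(e₁²e₂ + e₂e₁²) + ((1-t²)²/t²) e₂²
 + ((1+t)(4t-1)/t) e₁e₃ + ((1-t)(4t+1)/t) e₃e₁ + (3(1-t²)/t) e₄`
applied to the highest weight vector of `V(h,c)` with `c = 13 + 6t + 6t⁻¹` and
`h = -(3/4)(t + 2 + t⁻¹)` yields a vector annihilated by `e₋₁` and `e₋₂`. -/
theorem S22_singular
    (t : ℂ) (ht : t ≠ 0)
    (M : Type*) [AddCommGroup M] [Module ℂ M]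
    (e : ℤ → M →ₗ[ℂ] M) (v : M)
    (hrel : ∀ i j : ℤ, ∀ m : M,
      e i (e j m) - e j (e i m) =
        ((j : ℂ) - (i : ℂ)) • e (i + j) m +
          (if i + j = 0 then (((j : ℂ) ^ 3 - (j : ℂ)) / 12) * (13 + 6*t + 6*t⁻¹) else 0) • m)
    (hv0 : e 0 v = (-(3/4) * (t + 2 + t⁻¹)) • v)
    (hvneg : ∀ i : ℤ, i < 0 → e i v = 0) :
    ∀ w : M,
      w = e 1 (e 1 (e 1 (e 1 v)))
        + (4*t) • e 1 (e 2 (e 1 v))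
        + ((1 - t^2)/t) • (e 1 (e 1 (e 2 v)) + e 2 (e 1 (e 1 v)))
        + ((1 - t^2)^2/t^2) • e 2 (e 2 v)
        + ((1 + t)*(4*t - 1)/t) • e 1 (e 3 v)
        + ((1 - t)*(4*t + 1)/t) • e 3 (e 1 v)
        + (3*(1 - t^2)/t) • e 4 v →
      e (-1) w = 0 ∧ e (-2) w = 0 := by
  have L : ∀ (i j : ℤ) (m : M), e i (e j m) = e j (e i m)
      + (((j : ℂ) - (i : ℂ)) • e (i + j) m +
        (if i + j = 0 then (((j : ℂ) ^ 3 - (j : ℂ)) / 12) * (13 + 6*t + 6*t⁻¹) else 0) • m) := by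
    intro i j m
    have h := hrel i j m
    rw [sub_eq_iff_eq_add] at h
    rw [h]; abel
  have hm1 : e (-1) v = 0 := hvneg (-1) (by norm_num)
  have hm2 : e (-2) v = 0 := hvneg (-2) (by norm_num)
  have c11 : ∀ m, e (-1) (e 1 m) = e 1 (e (-1) m) + (2:ℂ) • e 0 m := by
    intro m; have := L (-1) 1 m; norm_num at this; convert this using 2 <;> norm_num
  have c12 : ∀ m, e (-1) (e 2 m) = e 2 (e (-1) m) + (3:ℂ) • e 1 m := by
    intro m; have := L (-1) 2 m; norm_num at this; convert this using 2 <;> norm_num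
  have c13 : ∀ m, e (-1) (e 3 m) = e 3 (e (-1) m) + (4:ℂ) • e 2 m := by
    intro m; have := L (-1) 3 m; norm_num at this; convert this using 2 <;> norm_num
  have c14 : ∀ m, e (-1) (e 4 m) = e 4 (e (-1) m) + (5:ℂ) • e 3 m := by
    intro m; have := L (-1) 4 m; norm_num at this; convert this using 2 <;> norm_num
  have c21 : ∀ m, e (-2) (e 1 m) = e 1 (e (-2) m) + (3:ℂ) • e (-1) m := by
    intro m; have := L (-2) 1 m; norm_num at this; convert this using 2 <;> norm_num
  have c22 : ∀ m, e (-2) (e 2 m) = e 2 (e (-2) m) + ((4:ℂ) • e 0 m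
      + ((1/2 * ((13:ℂ) + 6*t + 6*t⁻¹))) • m) := by
    intro m; have := L (-2) 2 m; norm_num at this; convert this using 2 <;> norm_num
  have c23 : ∀ m, e (-2) (e 3 m) = e 3 (e (-2) m) + (5:ℂ) • e 1 m := by
    intro m; have := L (-2) 3 m; norm_num at this; convert this using 2 <;> norm_num
  have c24 : ∀ m, e (-2) (e 4 m) = e 4 (e (-2) m) + (6:ℂ) • e 2 m := by
    intro m; have := L (-2) 4 m; norm_num at this; convert this using 2 <;> norm_num
  have c01 : ∀ m, e 0 (e 1 m) = e 1 (e 0 m) + (1:ℂ) • e 1 m := by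
    intro m; have := L 0 1 m; norm_num at this; convert this using 2 <;> norm_num
  have c02 : ∀ m, e 0 (e 2 m) = e 2 (e 0 m) + (2:ℂ) • e 2 m := by
    intro m; have := L 0 2 m; norm_num at this; convert this using 2 <;> norm_num
  have c03 : ∀ m, e 0 (e 3 m) = e 3 (e 0 m) + (3:ℂ) • e 3 m := by
    intro m; have := L 0 3 m; norm_num at this; convert this using 2 <;> norm_num
  have p21 : ∀ m, e 2 (e 1 m) = e 1 (e 2 m) + (-1:ℂ) • e 3 m := by
    intro m; have := L 2 1 m; norm_num at this; convert this using 2 <;> norm_num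
  have p31 : ∀ m, e 3 (e 1 m) = e 1 (e 3 m) + (-2:ℂ) • e 4 m := by
    intro m; have := L 3 1 m; norm_num at this; convert this using 2 <;> norm_num
  have hu : t * t⁻¹ = 1 := mul_inv_cancel₀ ht
  intro w hw
  subst hw
  constructor
  · simp only [map_add, map_smul, c11, c12, c13, c14, c01, c02, c03, p21, p31,
      hm1, hm2, hv0, map_zero, smul_zero, add_zero, zero_add, smul_add, smul_smul]
    match_scalars <;> (simp only [inv_eq_one_div]; field_simp; ring_nf)
  · simp only [map_add, map_smul, c21, c22, c23, c24, c11, c12, c13, c14, c01, c02, c03,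
      p21, p31, hm1, hm2, hv0, map_zero, smul_zero, add_zero, zero_add, smul_add, smul_smul]
    match_scalars <;> (simp only [inv_eq_one_div]; field_simp; ring_nf)
end

section
/- For a positive integer p and t ∈ ℂ nonzero, the coefficient of e_2^p in the expansion of S_{2,p}(t), given by f_p(2,...,2) with formula f_p(i_1,...,i_s) = ((2p-1)!)² (2t)^{s-2p} Π_{r=1}^{2p-1}(p-t-r) · Π_{m=1}^{s}(i_m(2t+1) + 2(p - t - Σ_{n=1}^{m} i_n)) / (Π_{l=0}^{2p-1}(2p-1-2l) · Π_{l=1}^{s-1}((Σ_{n=1}^{l} i_n)(2p - Σ_{n=1}^{l} i_n)(p - t - Σ_{n=1}^{l} i_n))), equals Π_{q=1}^{p}(t² - (p+1-2q)²)/t^p. -/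
open Finset

-- parity split of a product over range (2k+1)
lemma prod_odd_split (g : ℕ → ℂ) (k : ℕ) :
    ∏ j ∈ range (2*k+1), g j
      = (∏ i ∈ range (k+1), g (2*i)) * ∏ i ∈ range k, g (2*i+1) := by
  induction k with
  | zero => simp
  | succ n ih =>
    have h : 2*(n+1)+1 = (2*n+1) + 1 + 1 := by omega
    have h2 : 2*(n+1) = 2*n+1+1 := by omega
    rw [h, prod_range_succ, prod_range_succ, ih,
      prod_range_succ (fun i => g (2*i)) (n+1),
      prod_range_succ (fun i => g (2*i+1)) n, h2]
    ring

lemma prod_cast_succ (n : ℕ) : ∏ i ∈ range n, ((i:ℂ)+1) = n.factorial := by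
  induction n with
  | zero => simp
  | succ m ih => rw [prod_range_succ, ih]; push_cast [Nat.factorial_succ]; ring

lemma fact_odd (P : ℕ) :
    ((2*P+1).factorial : ℂ) = 2^P * P.factorial * ∏ i ∈ range (P+1), (2*(i:ℂ)+1) := by
  induction P with
  | zero => simp
  | succ n ih =>
    have h : 2*(n+1)+1 = (2*n+1) + 1 + 1 := by omega
    have hf : ((2*n+1+1+1).factorial : ℂ) = (2*(n:ℂ)+3)*(2*(n:ℂ)+2)*((2*n+1).factorial : ℂ) := by
      rw [Nat.factorial_succ, Nat.factorial_succ]; push_cast; ring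
    rw [h, prod_range_succ, hf, ih]
    push_cast [Nat.factorial_succ]
    ring

lemma prod_refl_odd (n : ℕ) :
    ∏ i ∈ range n, (2*(n:ℂ) - 1 - 2*i) = ∏ i ∈ range n, (2*(i:ℂ)+1) := by
  rw [← prod_range_reflect (fun j => (2*(j:ℂ)+1)) n]
  refine prod_congr rfl fun j hj => ?_
  have hj' : j < n := mem_range.mp hj
  have : ((n - 1 - j : ℕ) : ℂ) = (n:ℂ) - 1 - j := by
    have h1 : (1:ℕ) ≤ n := by omega
    have h2 : j ≤ n - 1 := by omega
    push_cast [Nat.cast_sub h2, Nat.cast_sub h1]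
    ring
  rw [this]; ring

lemma prod_refl_even (n : ℕ) :
    ∏ i ∈ range n, (2*(n:ℂ) - 2*i) = 2^n * n.factorial := by
  have : ∏ i ∈ range n, (2*(n:ℂ) - 2*i) = ∏ i ∈ range n, (2*((i:ℂ)+1)) := by
    rw [← prod_range_reflect (fun j => (2*((j:ℂ)+1))) n]
    refine prod_congr rfl fun j hj => ?_
    have hj' : j < n := mem_range.mp hj
    have : ((n - 1 - j : ℕ) : ℂ) = (n:ℂ) - 1 - j := by
      have h1 : (1:ℕ) ≤ n := by omega
      have h2 : j ≤ n - 1 := by omega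
      push_cast [Nat.cast_sub h2, Nat.cast_sub h1]
      ring
    rw [this]; ring
  rw [this, prod_mul_distrib, prod_const, prod_cast_succ, card_range]

lemma prod_D (n : ℕ) :
    ∏ l ∈ range (2*n), (2*(n:ℂ) - 1 - 2*l) = (-1)^n * (∏ i ∈ range n, (2*(i:ℂ)+1))^2 := by
  have h : 2*n = n + n := by omega
  rw [h, prod_range_add]
  have h1 : ∏ i ∈ range n, (2*(n:ℂ) - 1 - 2*i) = ∏ i ∈ range n, (2*(i:ℂ)+1) := prod_refl_odd n
  have h2 : ∏ i ∈ range n, (2*(n:ℂ) - 1 - 2*(n+i:ℕ)) = (-1)^n * ∏ i ∈ range n, (2*(i:ℂ)+1) := by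
    have : ∏ i ∈ range n, (2*(n:ℂ) - 1 - 2*(n+i:ℕ)) = ∏ i ∈ range n, ((-1) * (2*(i:ℂ)+1)) := by
      refine prod_congr rfl fun j hj => ?_
      push_cast; ring
    rw [this, prod_mul_distrib, prod_const, card_range]
  rw [h1, h2]; ring

lemma icc_to_range (f : ℕ → ℂ) (n : ℕ) :
    ∏ i ∈ Icc 1 n, f i = ∏ i ∈ range n, f (1+i) := by
  rw [← Finset.Ico_add_one_right_eq_Icc, prod_Ico_eq_prod_range]
  simp

/-- The coefficient of `e₂ᵖ` in the expansion of `S₂,ₚ(t)`, namely `f_p(2,…,2)` with the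
general formula for `f_p(i₁,…,i_s)` instantiated at the composition `(2,…,2)` (of length
`s = p`, with partial sums `Σ_{n=1}^{m} i_n = 2m`), equals
`∏_{q=1}^{p} (t² - (p+1-2q)²) / tᵖ`. -/
theorem f_p_two_two (p : ℕ) (hp : 0 < p) (t : ℂ) (ht : t ≠ 0)
    (hden : ∀ l : ℕ, 1 ≤ l → l ≤ p - 1 → (p : ℂ) - t - 2*(l : ℂ) ≠ 0) :
    ((Nat.factorial (2*p - 1) : ℂ))^2 * (2*t) ^ ((p : ℤ) - 2*(p : ℤ)) *
        (∏ r ∈ Finset.Icc 1 (2*p - 1), ((p : ℂ) - t - (r : ℂ))) *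
        (∏ m ∈ Finset.Icc 1 p, (2*(2*t + 1) + 2*((p : ℂ) - t - 2*(m : ℂ)))) /
      ((∏ l ∈ Finset.range (2*p), (2*(p : ℂ) - 1 - 2*(l : ℂ))) *
        ∏ l ∈ Finset.Icc 1 (p - 1),
          ((2*(l : ℂ)) * (2*(p : ℂ) - 2*(l : ℂ)) * ((p : ℂ) - t - 2*(l : ℂ)))) =
    (∏ q ∈ Finset.Icc 1 p, (t^2 - ((p : ℂ) + 1 - 2*(q : ℂ))^2)) / t^p := by
  obtain ⟨P, rfl⟩ : ∃ P, p = P + 1 := ⟨p - 1, by omega⟩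
  have e1 : 2*(P+1) - 1 = 2*P+1 := by omega
  have e2 : (P+1) - 1 = P := by omega
  rw [e1, e2]
  have ez : ((P+1:ℕ):ℤ) - 2*((P+1:ℕ):ℤ) = -((P+1:ℕ):ℤ) := by push_cast; ring
  rw [ez, zpow_neg, zpow_natCast]
  -- atomic products
  set E : ℂ := ∏ i ∈ range (P+1), (2*(i:ℂ)+1) with hE
  set X : ℂ := ∏ i ∈ range (P+1), (t - (P:ℂ) + 2*i) with hX
  set Y : ℂ := ∏ i ∈ range P, ((P:ℂ) - 1 - t - 2*i) with hY
  set Z : ℂ := ∏ i ∈ range (P+1), (t + (P:ℂ) - 2*i) with hZ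
  have hR1 : (∏ r ∈ Finset.Icc 1 (2*P+1), (((P+1:ℕ):ℂ) - t - (r:ℂ)))
      = (-1)^(P+1) * X * Y := by
    rw [icc_to_range]
    rw [prod_odd_split (fun j => ((P+1:ℕ):ℂ) - t - ((1+j:ℕ):ℂ)) P]
    have he : ∏ i ∈ range (P+1), (((P+1:ℕ):ℂ) - t - ((1+2*i:ℕ):ℂ))
        = (-1)^(P+1) * X := by
      have : ∏ i ∈ range (P+1), (((P+1:ℕ):ℂ) - t - ((1+2*i:ℕ):ℂ))
          = ∏ i ∈ range (P+1), ((-1) * (t - (P:ℂ) + 2*i)) := by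
        refine prod_congr rfl fun j hj => ?_
        push_cast; ring
      rw [this, prod_mul_distrib, prod_const, card_range, hX]
    have ho : ∏ i ∈ range P, (((P+1:ℕ):ℂ) - t - ((1+(2*i+1):ℕ):ℂ)) = Y := by
      refine prod_congr rfl fun j hj => ?_
      push_cast; ring
    rw [he, ho]
  have hR2 : (∏ m ∈ Finset.Icc 1 (P+1), (2*(2*t + 1) + 2*(((P+1:ℕ):ℂ) - t - 2*(m:ℂ))))
      = 2^(P+1) * Z := by
    rw [icc_to_range]
    have : ∏ i ∈ range (P+1), (2*(2*t + 1) + 2*(((P+1:ℕ):ℂ) - t - 2*((1+i:ℕ):ℂ)))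
        = ∏ i ∈ range (P+1), (2 * (t + (P:ℂ) - 2*i)) := by
      refine prod_congr rfl fun j hj => ?_
      push_cast; ring
    rw [this, prod_mul_distrib, prod_const, card_range, hZ]
  have hR3 : (∏ l ∈ Finset.Icc 1 P,
        ((2*(l:ℂ)) * (2*((P+1:ℕ):ℂ) - 2*(l:ℂ)) * (((P+1:ℕ):ℂ) - t - 2*(l:ℂ))))
      = (2^P * (P.factorial:ℂ)) * (2^P * (P.factorial:ℂ)) * Y := by
    rw [icc_to_range]
    have : ∏ i ∈ range P,
          ((2*((1+i:ℕ):ℂ)) * (2*((P+1:ℕ):ℂ) - 2*((1+i:ℕ):ℂ)) * (((P+1:ℕ):ℂ) - t - 2*((1+i:ℕ):ℂ)))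
        = ∏ i ∈ range P, ((2*((i:ℂ)+1)) * ((2*(P:ℂ) - 2*i) * ((P:ℂ) - 1 - t - 2*i))) := by
      refine prod_congr rfl fun j hj => ?_
      push_cast; ring
    rw [this]
    simp only [prod_mul_distrib]
    rw [prod_const, card_range, prod_cast_succ, prod_refl_even, hY]
    ring
  have hR4 : (∏ q ∈ Finset.Icc 1 (P+1), (t^2 - (((P+1:ℕ):ℂ) + 1 - 2*(q:ℂ))^2))
      = X * Z := by
    rw [icc_to_range]
    have : ∏ i ∈ range (P+1), (t^2 - (((P+1:ℕ):ℂ) + 1 - 2*((1+i:ℕ):ℂ))^2)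
        = ∏ i ∈ range (P+1), ((t - (P:ℂ) + 2*i) * (t + (P:ℂ) - 2*i)) := by
      refine prod_congr rfl fun j hj => ?_
      push_cast; ring
    rw [this, prod_mul_distrib, hX, hZ]
  rw [hR1, hR2, hR3, hR4, fact_odd, prod_D, ← hE]
  -- nonzeroness
  have hEne : E ≠ 0 := by
    rw [hE]
    refine prod_ne_zero_iff.mpr fun i _ => ?_
    have : (2*(i:ℂ)+1) = ((2*i+1 : ℕ) : ℂ) := by push_cast; ring
    rw [this, Nat.cast_ne_zero]; omega
  have hFne : ((P.factorial : ℂ)) ≠ 0 := by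
    rw [Nat.cast_ne_zero]; exact P.factorial_ne_zero
  have hYne : Y ≠ 0 := by
    rw [hY]
    refine prod_ne_zero_iff.mpr fun i hi => ?_
    have hi' : i < P := mem_range.mp hi
    have h := hden (i+1) (by omega) (by omega)
    have heq : ((P+1:ℕ):ℂ) - t - 2*((i+1:ℕ):ℂ) = (P:ℂ) - 1 - t - 2*i := by
      push_cast; ring
    rwa [heq] at h
  have hT : t^(P+1) ≠ 0 := pow_ne_zero _ ht
  have hEXP : (((2:ℂ)*t)^(P+1))⁻¹ = ((2:ℂ)^(P+1))⁻¹ * (t^(P+1))⁻¹ := by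
    rw [mul_pow, mul_inv]
  rw [hEXP]
  have hD : (-1:ℂ)^(P+1) * E^2 * (2^P * (P.factorial:ℂ) * (2^P * (P.factorial:ℂ)) * Y) ≠ 0 := by
    refine mul_ne_zero (mul_ne_zero ?_ ?_) (mul_ne_zero (mul_ne_zero ?_ ?_) ?_)
    · exact pow_ne_zero _ (by norm_num)
    · exact pow_ne_zero _ hEne
    · exact mul_ne_zero (pow_ne_zero _ two_ne_zero) hFne
    · exact mul_ne_zero (pow_ne_zero _ two_ne_zero) hFne
    · exact hYne
  rw [div_eq_div_iff hD hT]
  have ha : (2:ℂ)^(P+1) * ((2:ℂ)^(P+1))⁻¹ = 1 := mul_inv_cancel₀ (pow_ne_zero _ two_ne_zero)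
  have hb : t^(P+1) * (t^(P+1))⁻¹ = 1 := mul_inv_cancel₀ hT
  linear_combination (X * Z * (-1:ℂ)^(P+1) * E^2 * 2^(2*P) * ((P.factorial:ℂ))^2 * Y * t^(P+1) * (t^(P+1))⁻¹) * ha
    + (X * Z * (-1:ℂ)^(P+1) * E^2 * 2^(2*P) * ((P.factorial:ℂ))^2 * Y) * hb
end
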